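/- arXiv:1010.3996 — 5 statements merged into one kernel-verified Lean document; each statement's English description precedes it below -/
import Mathlib

section
/- Let a ≠ 0, b, c be real numbers and let I be a bounded interval of the real line. Then the Lebesgue measure of {x ∈ ℝ : a·x² + b·x + c ∈ I} is at most 2 · |I|^{1/2} / |a|^{1/2}. -/
open MeasureTheory

theorem mul_nonneg_of_nonpos_nonpos' {a b : ℝ} (ha : a ≤ 0) (hb : b ≤ 0) : 0 ≤ a * b := by nlinarith

/-- For `a ≠ 0` and a bounded interval `I`, the Lebesgue measure of
`{x : a x² + b x + c ∈ I}` is at most `2 |I|^{1/2} / |a|^{1/2}`. -/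
theorem measure_quadratic_preimage_le
    (a b c : ℝ) (ha : a ≠ 0)
    (I : Set ℝ) (hI : I.OrdConnected) (hIb : Bornology.IsBounded I) :
    volume {x : ℝ | a * x ^ 2 + b * x + c ∈ I} ≤
      ENNReal.ofReal (2 * (volume I).toReal ^ ((1 : ℝ) / 2) / |a| ^ ((1 : ℝ) / 2)) := by
  set S := {x : ℝ | a * x ^ 2 + b * x + c ∈ I} with hSdef
  set v : ℝ := -b / (2 * a) with hv
  set t : ℝ := (volume I).toReal with ht
  have ht0 : 0 ≤ t := ENNReal.toReal_nonneg
  have ha0 : 0 < |a| := abs_pos.mpr ha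
  set r : ℝ := Real.sqrt (t / |a|) with hr
  have hr0 : 0 ≤ r := Real.sqrt_nonneg _
  have hvolI : volume I ≠ ⊤ := hIb.measure_lt_top.ne
  -- values of the quadratic at two points of S differ by at most t
  have hfdiff : ∀ x ∈ S, ∀ y ∈ S,
      |(a * x ^ 2 + b * x + c) - (a * y ^ 2 + b * y + c)| ≤ t := by
    intro x hx y hy
    set p := a * x ^ 2 + b * x + c
    set q := a * y ^ 2 + b * y + c
    have h1 : Set.Icc (min p q) (max p q) ⊆ I := by
      rcases le_total p q with h | h
      · rw [min_eq_left h, max_eq_right h]; exact hI.out hx hy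
      · rw [min_eq_right h, max_eq_left h]; exact hI.out hy hx
    have h2 : ENNReal.ofReal (max p q - min p q) ≤ volume I := by
      have := measure_mono (μ := volume) h1
      rwa [Real.volume_Icc] at this
    have h3 := ENNReal.toReal_mono hvolI h2
    rw [ENNReal.toReal_ofReal (by simp [max_sub_min_eq_abs])] at h3
    calc |p - q| = max p q - min p q := by rw [max_sub_min_eq_abs, abs_sub_comm]
      _ ≤ t := h3
  -- two points of S on the same side of the vertex are within r of each other
  have key : ∀ x ∈ S, ∀ y ∈ S, 0 ≤ (x - v) * (y - v) → dist x y ≤ r := by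
    intro x hx y hy hsign
    have hD : a * x ^ 2 + b * x + c - (a * y ^ 2 + b * y + c)
        = a * ((x - v) + (y - v)) * (x - y) := by
      rw [hv]; field_simp; ring
    have habs : |x - y| ≤ |(x - v) + (y - v)| := by
      have hsq : (x - y) ^ 2 ≤ ((x - v) + (y - v)) ^ 2 := by nlinarith
      have := Real.sqrt_le_sqrt hsq
      rwa [Real.sqrt_sq_eq_abs, Real.sqrt_sq_eq_abs] at this
    have h1 : |a| * (x - y) ^ 2 ≤ t := by
      have h2 : |a| * (x - y) ^ 2 ≤ |a * ((x - v) + (y - v)) * (x - y)| := by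
        rw [abs_mul, abs_mul]
        calc |a| * (x - y) ^ 2 = |a| * |x - y| * |x - y| := by
              rw [← sq_abs]; ring
          _ ≤ |a| * |(x - v) + (y - v)| * |x - y| :=
              mul_le_mul_of_nonneg_right
                (mul_le_mul_of_nonneg_left habs (abs_nonneg a)) (abs_nonneg _)
      calc |a| * (x - y) ^ 2 ≤ _ := h2
        _ ≤ t := hD ▸ hfdiff x hx y hy
    have h3 : (x - y) ^ 2 ≤ t / |a| := (le_div_iff₀ ha0).mpr (by linarith [h1])
    have h4 := Real.sqrt_le_sqrt h3
    rw [Real.sqrt_sq_eq_abs] at h4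
    rwa [Real.dist_eq]
  -- sets with pairwise distances ≤ r have measure ≤ r
  have hdiam : ∀ T : Set ℝ, (∀ x ∈ T, ∀ y ∈ T, dist x y ≤ r) →
      volume T ≤ ENNReal.ofReal r := by
    intro T h
    refine le_trans (Real.volume_le_diam T) (EMetric.diam_le ?_)
    intro x hx y hy
    rw [edist_dist]
    exact ENNReal.ofReal_le_ofReal (h x hx y hy)
  have h1 : volume (S ∩ Set.Iic v) ≤ ENNReal.ofReal r := by
    refine hdiam _ ?_
    rintro x ⟨hx, hx'⟩ y ⟨hy, hy'⟩
    exact key x hx y hy (mul_nonneg_of_nonpos_nonpos' (by simpa using hx') (by simpa using hy'))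
  have h2 : volume (S ∩ Set.Ici v) ≤ ENNReal.ofReal r := by
    refine hdiam _ ?_
    rintro x ⟨hx, hx'⟩ y ⟨hy, hy'⟩
    exact key x hx y hy (mul_nonneg (by simpa using hx') (by simpa using hy'))
  have hcover : S ⊆ (S ∩ Set.Iic v) ∪ (S ∩ Set.Ici v) := by
    intro x hx
    rcases le_total x v with h | h
    · exact Or.inl ⟨hx, h⟩
    · exact Or.inr ⟨hx, h⟩
  have hfin : volume S ≤ ENNReal.ofReal r + ENNReal.ofReal r :=
    le_trans (measure_mono hcover) (le_trans (measure_union_le _ _) (add_le_add h1 h2))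
  rw [← ENNReal.ofReal_add hr0 hr0] at hfin
  refine le_trans hfin (ENNReal.ofReal_le_ofReal (le_of_eq ?_))
  rw [hr, Real.sqrt_div ht0, Real.sqrt_eq_rpow, Real.sqrt_eq_rpow]
  ring
end

section
/- Let a ≠ 0, b, c be real numbers and let I be a bounded interval of the real line. Then the number of integers q ∈ ℤ with a·q² + b·q + c ∈ I is at most 2·(|I|^{1/2} / |a|^{1/2} + 1). -/
open MeasureTheory

lemma aux_sqrt_add_le (x y : ℝ) (hx : 0 ≤ x) (hy : 0 ≤ y) :
    Real.sqrt (x + y) ≤ Real.sqrt x + Real.sqrt y := by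
  have h : x + y ≤ (Real.sqrt x + Real.sqrt y) ^ 2 := by
    nlinarith [Real.sq_sqrt hx, Real.sq_sqrt hy,
      mul_nonneg (Real.sqrt_nonneg x) (Real.sqrt_nonneg y)]
  calc Real.sqrt (x + y) ≤ Real.sqrt ((Real.sqrt x + Real.sqrt y) ^ 2) :=
        Real.sqrt_le_sqrt h
    _ = Real.sqrt x + Real.sqrt y := by
        rw [Real.sqrt_sq (by positivity)]

lemma aux_int_finite {S : Set ℤ} {x y : ℝ} (hS : ∀ q ∈ S, (q : ℝ) ∈ Set.Icc x y) :
    S.Finite := by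
  apply Set.Finite.subset (Set.finite_Icc ⌈x⌉ ⌊y⌋)
  intro q hq
  obtain ⟨h1, h2⟩ := hS q hq
  exact ⟨Int.ceil_le.mpr h1, Int.le_floor.mpr h2⟩

lemma aux_int_ncard_le {S : Set ℤ} {x ℓ : ℝ} (hℓ : 0 ≤ ℓ)
    (hS : ∀ q ∈ S, (q : ℝ) ∈ Set.Icc x (x + ℓ)) :
    (S.ncard : ℝ) ≤ ℓ + 1 := by
  have hsub : S ⊆ Set.Icc ⌈x⌉ ⌊x + ℓ⌋ := by
    intro q hq
    obtain ⟨h1, h2⟩ := hS q hq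
    exact ⟨Int.ceil_le.mpr h1, Int.le_floor.mpr h2⟩
  have h1 : S.ncard ≤ (Set.Icc ⌈x⌉ ⌊x + ℓ⌋).ncard :=
    Set.ncard_le_ncard hsub (Set.finite_Icc _ _)
  have h2 : (Set.Icc ⌈x⌉ ⌊x + ℓ⌋).ncard = (⌊x + ℓ⌋ + 1 - ⌈x⌉).toNat := by
    rw [← Finset.coe_Icc, Set.ncard_coe_finset, Int.card_Icc]
  have h3 : ((⌊x + ℓ⌋ + 1 - ⌈x⌉).toNat : ℝ) ≤ ℓ + 1 := by
    rcases le_or_gt (⌊x + ℓ⌋ + 1 - ⌈x⌉) 0 with h | h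
    · rw [Int.toNat_of_nonpos h]
      push_cast
      linarith
    · have hf : ((⌊x + ℓ⌋ : ℤ) : ℝ) ≤ x + ℓ := Int.floor_le _
      have hc : x ≤ ((⌈x⌉ : ℤ) : ℝ) := Int.le_ceil _
      rw [show (((⌊x + ℓ⌋ + 1 - ⌈x⌉).toNat : ℕ) : ℝ) = ((⌊x + ℓ⌋ + 1 - ⌈x⌉ : ℤ) : ℝ) by
        exact_mod_cast Int.toNat_of_nonneg h.le]
      push_cast
      linarith
  calc (S.ncard : ℝ) ≤ ((Set.Icc ⌈x⌉ ⌊x + ℓ⌋).ncard : ℝ) := by exact_mod_cast h1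
    _ = ((⌊x + ℓ⌋ + 1 - ⌈x⌉).toNat : ℝ) := by rw [h2]
    _ ≤ ℓ + 1 := h3

/-- For `a ≠ 0` and a bounded interval `I`, the number of integers `q`
with `a q² + b q + c ∈ I` is at most `2 (|I|^{1/2} / |a|^{1/2} + 1)`. -/
theorem count_quadratic_integer_preimage_le
    (a b c : ℝ) (ha : a ≠ 0)
    (I : Set ℝ) (hI : I.OrdConnected) (hIb : Bornology.IsBounded I) :
    Measure.count {q : ℤ | a * (q : ℝ) ^ 2 + b * (q : ℝ) + c ∈ I} ≤
      ENNReal.ofReal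
        (2 * ((volume I).toReal ^ ((1 : ℝ) / 2) / |a| ^ ((1 : ℝ) / 2) + 1)) := by
  set T : Set ℤ := {q : ℤ | a * (q : ℝ) ^ 2 + b * (q : ℝ) + c ∈ I} with hT
  set V : ℝ := (volume I).toReal with hV
  have haa : 0 < |a| := abs_pos.mpr ha
  have hVnn : 0 ≤ V := ENNReal.toReal_nonneg
  set W : ℝ := V / |a| with hW
  have hWnn : 0 ≤ W := div_nonneg hVnn haa.le
  set L : ℝ := Real.sqrt W with hL
  have hLnn : 0 ≤ L := Real.sqrt_nonneg _
  have hRHS : V ^ ((1 : ℝ) / 2) / |a| ^ ((1 : ℝ) / 2) + 1 = L + 1 := by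
    rw [hL, hW, Real.sqrt_div hVnn, Real.sqrt_eq_rpow, Real.sqrt_eq_rpow]
  rcases Set.eq_empty_or_nonempty T with hTe | ⟨q0, hq0⟩
  · rw [hTe, measure_empty]
    exact zero_le
  have hVtop : volume I ≠ ⊤ := hIb.measure_lt_top.ne
  set u : ℤ → ℝ := fun q => (q : ℝ) + b / (2 * a) with hu
  -- key pairwise bound
  have key : ∀ q ∈ T, ∀ q' ∈ T, |u q ^ 2 - u q' ^ 2| ≤ W := by
    intro q hq q' hq'
    have h1 : Set.uIcc (a * (q : ℝ) ^ 2 + b * (q : ℝ) + c)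
        (a * (q' : ℝ) ^ 2 + b * (q' : ℝ) + c) ⊆ I := hI.uIcc_subset hq hq'
    have h2 : ENNReal.ofReal |(a * (q' : ℝ) ^ 2 + b * (q' : ℝ) + c)
        - (a * (q : ℝ) ^ 2 + b * (q : ℝ) + c)| ≤ volume I := by
      rw [← Real.volume_interval]
      exact measure_mono h1
    have h3 : |(a * (q' : ℝ) ^ 2 + b * (q' : ℝ) + c)
        - (a * (q : ℝ) ^ 2 + b * (q : ℝ) + c)| ≤ V := by
      have h := ENNReal.toReal_mono hVtop h2
      rwa [ENNReal.toReal_ofReal (abs_nonneg _)] at h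
    have h4 : (a * (q' : ℝ) ^ 2 + b * (q' : ℝ) + c)
        - (a * (q : ℝ) ^ 2 + b * (q : ℝ) + c) = a * (u q' ^ 2 - u q ^ 2) := by
      simp only [hu]
      field_simp
      ring
    have h5 : |a| * |u q' ^ 2 - u q ^ 2| ≤ V := by
      rw [← abs_mul, ← h4]; exact h3
    rw [abs_sub_comm]
    rw [hW, le_div_iff₀ haa]
    linarith [h5]
  -- finiteness
  have hbound : ∀ q ∈ T, |u q| ≤ Real.sqrt (u q0 ^ 2 + W) := by
    intro q hq
    have h := abs_le.mp (key q hq q0 hq0)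
    have h2 : u q ^ 2 ≤ u q0 ^ 2 + W := by linarith [h.2]
    calc |u q| = Real.sqrt (u q ^ 2) := (Real.sqrt_sq_eq_abs _).symm
      _ ≤ _ := Real.sqrt_le_sqrt h2
  have hfin : T.Finite := by
    apply aux_int_finite (x := -(b / (2 * a)) - Real.sqrt (u q0 ^ 2 + W))
      (y := -(b / (2 * a)) + Real.sqrt (u q0 ^ 2 + W))
    intro q hq
    have h := abs_le.mp (hbound q hq)
    simp only [hu] at h
    constructor <;> [linarith [h.1]; linarith [h.2]]
  -- minimal value of (u q)^2
  obtain ⟨q1, hq1, hmin⟩ := Set.exists_min_image T (fun q => u q ^ 2) hfin ⟨q0, hq0⟩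
  set s : ℝ := u q1 ^ 2 with hs
  have hsnn : 0 ≤ s := sq_nonneg _
  have hrange : ∀ q ∈ T, Real.sqrt s ≤ |u q| ∧ |u q| ≤ Real.sqrt s + L := by
    intro q hq
    have h1 : s ≤ u q ^ 2 := hmin q hq
    have h2 : u q ^ 2 ≤ s + W := by
      have h := abs_le.mp (key q hq q1 hq1); linarith [h.2]
    refine ⟨?_, ?_⟩
    · calc Real.sqrt s ≤ Real.sqrt (u q ^ 2) := Real.sqrt_le_sqrt h1
        _ = |u q| := Real.sqrt_sq_eq_abs _
    · calc |u q| = Real.sqrt (u q ^ 2) := (Real.sqrt_sq_eq_abs _).symm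
        _ ≤ Real.sqrt (s + W) := Real.sqrt_le_sqrt h2
        _ ≤ Real.sqrt s + L := aux_sqrt_add_le s W hsnn hWnn
  -- split into positive and negative parts
  set Tp : Set ℤ := {q | q ∈ T ∧ 0 ≤ u q} with hTp
  set Tm : Set ℤ := {q | q ∈ T ∧ u q < 0} with hTm
  have hcov : T ⊆ Tp ∪ Tm := by
    intro q hq
    rcases le_or_gt 0 (u q) with h | h
    · exact Or.inl ⟨hq, h⟩
    · exact Or.inr ⟨hq, h⟩
  have hp : (Tp.ncard : ℝ) ≤ L + 1 := by
    apply aux_int_ncard_le hLnn (x := Real.sqrt s - b / (2 * a))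
    rintro q ⟨hq, hpos⟩
    obtain ⟨h1, h2⟩ := hrange q hq
    rw [abs_of_nonneg hpos] at h1 h2
    simp only [hu] at h1 h2
    constructor <;> [linarith; linarith]
  have hm : (Tm.ncard : ℝ) ≤ L + 1 := by
    apply aux_int_ncard_le hLnn (x := -Real.sqrt s - L - b / (2 * a))
    rintro q ⟨hq, hneg⟩
    obtain ⟨h1, h2⟩ := hrange q hq
    rw [abs_of_neg hneg] at h1 h2
    simp only [hu] at h1 h2
    constructor <;> [linarith; linarith]
  have hcard : (T.ncard : ℝ) ≤ 2 * (L + 1) := by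
    have h1 : T.ncard ≤ (Tp ∪ Tm).ncard :=
      Set.ncard_le_ncard hcov ((hfin.subset (fun q hq => hq.1)).union
        (hfin.subset (fun q hq => hq.1)))
    have h2 : (Tp ∪ Tm).ncard ≤ Tp.ncard + Tm.ncard := Set.ncard_union_le _ _
    have h3 : (T.ncard : ℝ) ≤ (Tp.ncard : ℝ) + (Tm.ncard : ℝ) := by
      exact_mod_cast h1.trans h2
    linarith
  rw [Measure.count_apply_finite T hfin]
  have hcc : hfin.toFinset.card = T.ncard := (Set.ncard_eq_toFinset_card T hfin).symm
  calc (hfin.toFinset.card : ENNReal)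
      = ENNReal.ofReal ((hfin.toFinset.card : ℕ) : ℝ) := (ENNReal.ofReal_natCast _).symm
    _ ≤ ENNReal.ofReal (2 * (L + 1)) := by
        apply ENNReal.ofReal_le_ofReal
        rw [hcc]; exact_mod_cast hcard
    _ = ENNReal.ofReal (2 * (V ^ ((1 : ℝ) / 2) / |a| ^ ((1 : ℝ) / 2) + 1)) := by
        rw [hRHS]
end

section
/- Let τ, τ₁, q, q₁ be real numbers and let ξ, ξ₁ be real numbers with ξ ≠ 0, ξ₁ ≠ 0 and ξ − ξ₁ ≠ 0. Set σ = τ − ξ³ + q²/ξ, σ₁ = τ₁ − ξ₁³ + q₁²/ξ₁ and σ₂ = (τ − τ₁) − (ξ − ξ₁)³ + (q − q₁)²/(ξ − ξ₁). Then |σ − σ₁ − σ₂| = |3 ξ ξ₁ (ξ − ξ₁) + (ξ q₁ − ξ₁ q)² / (ξ ξ₁ (ξ − ξ₁))|, and moreover |σ − σ₁ − σ₂| ≥ 3 |ξ ξ₁ (ξ − ξ₁)|. -/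
/-- the resonance relation for the KP-II dispersion relation. -/
theorem kpII_resonance_relation
    (τ τ₁ q q₁ ξ ξ₁ : ℝ) (hξ : ξ ≠ 0) (hξ₁ : ξ₁ ≠ 0) (hξξ₁ : ξ - ξ₁ ≠ 0) :
    |(τ - ξ ^ 3 + q ^ 2 / ξ) - (τ₁ - ξ₁ ^ 3 + q₁ ^ 2 / ξ₁) -
        ((τ - τ₁) - (ξ - ξ₁) ^ 3 + (q - q₁) ^ 2 / (ξ - ξ₁))| =
      |3 * ξ * ξ₁ * (ξ - ξ₁) + (ξ * q₁ - ξ₁ * q) ^ 2 / (ξ * ξ₁ * (ξ - ξ₁))| ∧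
    3 * |ξ * ξ₁ * (ξ - ξ₁)| ≤
      |(τ - ξ ^ 3 + q ^ 2 / ξ) - (τ₁ - ξ₁ ^ 3 + q₁ ^ 2 / ξ₁) -
        ((τ - τ₁) - (ξ - ξ₁) ^ 3 + (q - q₁) ^ 2 / (ξ - ξ₁))| := by
  set D : ℝ := ξ * ξ₁ * (ξ - ξ₁) with hD
  have hDne : D ≠ 0 := by
    simp [hD, mul_ne_zero, hξ, hξ₁, hξξ₁]
  have key : (τ - ξ ^ 3 + q ^ 2 / ξ) - (τ₁ - ξ₁ ^ 3 + q₁ ^ 2 / ξ₁) -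
        ((τ - τ₁) - (ξ - ξ₁) ^ 3 + (q - q₁) ^ 2 / (ξ - ξ₁)) =
      -(3 * ξ * ξ₁ * (ξ - ξ₁) + (ξ * q₁ - ξ₁ * q) ^ 2 / (ξ * ξ₁ * (ξ - ξ₁))) := by
    field_simp
    ring
  refine ⟨by rw [key, abs_neg], ?_⟩
  rw [key, abs_neg]
  have hB : (ξ * q₁ - ξ₁ * q) ^ 2 / (ξ * ξ₁ * (ξ - ξ₁)) =
      D * ((ξ * q₁ - ξ₁ * q) ^ 2 / D ^ 2) := by
    rw [hD]; field_simp
  have hc : 0 ≤ (ξ * q₁ - ξ₁ * q) ^ 2 / D ^ 2 := by positivity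
  rw [hB]
  rcases lt_or_gt_of_ne hDne with h | h
  · rw [abs_of_neg h, abs_of_nonpos (by nlinarith)]
    nlinarith
  · rw [abs_of_pos h, abs_of_nonneg (by nlinarith)]
    nlinarith
end

section
/- For every c₀ ≥ 1 there exists a constant C > 0 (depending only on c₀) with the following property. Let τ ∈ ℝ, ξ > 0, q ∈ ℤ, K₁, K₂ ≥ 1, M₁, M₂ ≥ 1, and let I₁, I₂ be intervals. Let B¹ be the set of (ξ₁, q₁) ∈ ℝ×ℤ such that ξ₁ ∈ I₁, ξ − ξ₁ ∈ I₂, M₁ ≤ ξ₁ ≤ 2M₁, M₂ ≤ ξ − ξ₁ ≤ 2M₂, ⟨τ − ξ³ + q²/ξ + 3 ξ ξ₁ (ξ − ξ₁) + (ξ q₁ − ξ₁ q)²/(ξ ξ₁ (ξ − ξ₁))⟩ ≤ c₀ (K₁∨K₂), and |q₁/ξ₁ − (q − q₁)/(ξ − ξ₁)| ≤ 1. Then μ(B¹) ≤ C · (K₁∨K₂)^{1/2} (M₁∧M₂)^{1/2}, where μ is the product of Lebesgue measure on ℝ and counting measure on ℤ. -/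
open MeasureTheory
open scoped ENNReal NNReal

/-- Japanese bracket `⟨x⟩ = (1+x²)^{1/2}`. -/
noncomputable def jb (x : ℝ) : ℝ := Real.sqrt (1 + x ^ 2)

private instance : SigmaFinite (Measure.count : Measure ℤ) := by
  refine ⟨⟨⟨fun n => ↑(Finset.Icc (-(n:ℤ)) n), fun _ => trivial, fun n => ?_, ?_⟩⟩⟩
  · rw [Measure.count_apply_finset]
    exact ENNReal.natCast_lt_top _
  · apply Set.eq_univ_of_forall
    intro k
    simp only [Set.mem_iUnion, Finset.coe_Icc, Set.mem_Icc]
    exact ⟨k.natAbs, by omega, by omega⟩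

private lemma sqrt_add_le'' {a b : ℝ} (ha : 0 ≤ a) (hb : 0 ≤ b) :
    Real.sqrt (a + b) ≤ Real.sqrt a + Real.sqrt b := by
  have h : a + b ≤ (Real.sqrt a + Real.sqrt b) ^ 2 := by
    nlinarith [Real.sq_sqrt ha, Real.sq_sqrt hb, Real.sqrt_nonneg a, Real.sqrt_nonneg b,
      mul_nonneg (Real.sqrt_nonneg a) (Real.sqrt_nonneg b)]
  calc Real.sqrt (a + b) ≤ Real.sqrt ((Real.sqrt a + Real.sqrt b) ^ 2) := Real.sqrt_le_sqrt h
    _ = _ := Real.sqrt_sq (by positivity)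

private lemma sqrt_sub_max_le {u v L : ℝ} (h1 : v - u ≤ L) (h2 : u < 0 → v ≤ L) :
    Real.sqrt v - Real.sqrt (max 0 u) ≤ Real.sqrt L := by
  rcases lt_or_ge u 0 with hu | hu
  · rw [max_eq_left hu.le, Real.sqrt_zero]
    have := Real.sqrt_le_sqrt (h2 hu)
    linarith
  · rw [max_eq_right hu]
    rcases le_or_gt v u with hv | hv
    · have h3 := Real.sqrt_le_sqrt hv
      have := Real.sqrt_nonneg L
      linarith
    · have : Real.sqrt v ≤ Real.sqrt u + Real.sqrt (v - u) := by
        calc Real.sqrt v = Real.sqrt (u + (v - u)) := by ring_nf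
          _ ≤ _ := sqrt_add_le'' hu (by linarith)
      have := Real.sqrt_le_sqrt h1
      linarith

private lemma count_int_Icc_le (a b : ℝ) :
    Measure.count {n : ℤ | a ≤ (n : ℝ) ∧ (n : ℝ) ≤ b} ≤ ENNReal.ofReal (b - a + 1) := by
  rcases le_or_gt a b with hab | hab
  · have hsub : {n : ℤ | a ≤ (n : ℝ) ∧ (n : ℝ) ≤ b} ⊆ ↑(Finset.Icc ⌈a⌉ ⌊b⌋) := by
      intro n hn
      simp only [Finset.coe_Icc, Set.mem_Icc]
      exact ⟨Int.ceil_le.2 hn.1, Int.le_floor.2 hn.2⟩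
    refine le_trans (measure_mono hsub) ?_
    rw [Measure.count_apply_finset, Int.card_Icc]
    have h1 : (((⌊b⌋ + 1 - ⌈a⌉).toNat : ℕ) : ℝ) ≤ b - a + 1 := by
      rcases le_or_gt (⌊b⌋ + 1 - ⌈a⌉) 0 with h | h
      · rw [Int.toNat_of_nonpos h]; push_cast; linarith
      · have h2 := Int.floor_le b
        have h3 := Int.le_ceil a
        have h4 : ((⌊b⌋ + 1 - ⌈a⌉).toNat : ℤ) = ⌊b⌋ + 1 - ⌈a⌉ := Int.toNat_of_nonneg h.le
        have h5 : (((⌊b⌋ + 1 - ⌈a⌉).toNat : ℕ) : ℝ) = (⌊b⌋ : ℝ) + 1 - (⌈a⌉ : ℝ) := by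
          exact_mod_cast congrArg (Int.cast : ℤ → ℝ) h4
        rw [h5]
        linarith
    calc ((((⌊b⌋ + 1 - ⌈a⌉).toNat : ℕ)) : ℝ≥0∞)
        = ENNReal.ofReal (((⌊b⌋ + 1 - ⌈a⌉).toNat : ℕ) : ℝ) := (ENNReal.ofReal_natCast _).symm
      _ ≤ _ := ENNReal.ofReal_le_ofReal h1
  · have he : {n : ℤ | a ≤ (n : ℝ) ∧ (n : ℝ) ≤ b} = ∅ := by
      ext n
      simp only [Set.mem_setOf_eq, Set.mem_empty_iff_false, iff_false, not_and, not_le]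
      intro h; linarith
    rw [he, measure_empty]
    exact zero_le

private lemma final_real {c K m ξ : ℝ} (hc : 1 ≤ c) (hK : 1 ≤ K) (hm : 1 ≤ m) (hξ : 2 * m ≤ ξ) :
    min (5 * m) (6 * Real.sqrt (c * K * m)) * (2 * Real.sqrt ((2 * c * K + 2 * m) / (3 * ξ)))
      ≤ 22 * c * Real.sqrt K * Real.sqrt m := by
  have hξ0 : (0:ℝ) < ξ := by linarith
  have hm0 : (0:ℝ) ≤ m := by linarith
  have hcK0 : (0:ℝ) ≤ c * K := by nlinarith
  set A := Real.sqrt (c * K / ξ) with hA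
  set B := Real.sqrt (m / ξ) with hB
  set F := min (5 * m) (6 * Real.sqrt (c * K * m)) with hFdef
  have hF0 : 0 ≤ F := le_min (by linarith) (by positivity)
  have hF1 : F ≤ 5 * m := min_le_left _ _
  have hF2 : F ≤ 6 * Real.sqrt (c * K * m) := min_le_right _ _
  have hA0 : 0 ≤ A := Real.sqrt_nonneg _
  have hB0 : 0 ≤ B := Real.sqrt_nonneg _
  have hsplit : Real.sqrt ((2 * c * K + 2 * m) / (3 * ξ)) ≤ A + B := by
    rw [show (2 * c * K + 2 * m) / (3 * ξ) = 2 * c * K / (3 * ξ) + 2 * m / (3 * ξ) by ring]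
    refine le_trans (sqrt_add_le'' (by positivity) (by positivity)) ?_
    have h1 : Real.sqrt (2 * c * K / (3 * ξ)) ≤ A := by
      apply Real.sqrt_le_sqrt; rw [div_le_div_iff₀ (by positivity) hξ0]; nlinarith
    have h2 : Real.sqrt (2 * m / (3 * ξ)) ≤ B := by
      apply Real.sqrt_le_sqrt; rw [div_le_div_iff₀ (by positivity) hξ0]; nlinarith
    linarith
  have t1 : m * A ≤ Real.sqrt (c * K) * Real.sqrt m := by
    have h := Real.sqrt_mul (sq_nonneg m) (c * K / ξ)
    rw [Real.sqrt_sq hm0] at h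
    rw [hA, ← h, ← Real.sqrt_mul hcK0]
    apply Real.sqrt_le_sqrt
    rw [show m ^ 2 * (c * K / ξ) = m ^ 2 * (c * K) / ξ by ring, div_le_iff₀ hξ0]
    nlinarith [mul_nonneg hcK0 (mul_nonneg hm0 (by linarith : (0:ℝ) ≤ ξ - m))]
  have t2 : Real.sqrt (c * K * m) * B ≤ Real.sqrt (c * K) * Real.sqrt m := by
    have hB1 : B ≤ 1 := by
      rw [hB, show (1:ℝ) = Real.sqrt 1 from Real.sqrt_one.symm]
      apply Real.sqrt_le_sqrt
      rw [div_le_one hξ0]; linarith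
    calc Real.sqrt (c * K * m) * B ≤ Real.sqrt (c * K * m) * 1 :=
          mul_le_mul_of_nonneg_left hB1 (Real.sqrt_nonneg _)
      _ = Real.sqrt (c * K) * Real.sqrt m := by rw [mul_one, Real.sqrt_mul hcK0]
  have hsc : Real.sqrt (c * K) ≤ c * Real.sqrt K := by
    rw [Real.sqrt_mul (by linarith : (0:ℝ) ≤ c)]
    have h1 : (1:ℝ) ≤ Real.sqrt c := by
      rw [show (1:ℝ) = Real.sqrt 1 from Real.sqrt_one.symm]
      exact Real.sqrt_le_sqrt hc
    have h2 : Real.sqrt c ≤ c := by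
      nlinarith [Real.sq_sqrt (by linarith : (0:ℝ) ≤ c)]
    exact mul_le_mul_of_nonneg_right h2 (Real.sqrt_nonneg K)
  have hsm0 : 0 ≤ Real.sqrt m := Real.sqrt_nonneg m
  have s1 : F * (2 * Real.sqrt ((2 * c * K + 2 * m) / (3 * ξ))) ≤ F * (2 * (A + B)) :=
    mul_le_mul_of_nonneg_left (by linarith) hF0
  have s3 : F * A ≤ 5 * m * A := mul_le_mul_of_nonneg_right hF1 hA0
  have s4 : F * B ≤ 6 * Real.sqrt (c * K * m) * B := mul_le_mul_of_nonneg_right hF2 hB0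
  have s7 : Real.sqrt (c * K) * Real.sqrt m ≤ c * Real.sqrt K * Real.sqrt m :=
    mul_le_mul_of_nonneg_right hsc hsm0
  nlinarith [s1, s3, s4, s7, t1, t2]

set_option maxHeartbeats 2000000 in
/-- size estimate for the region `B¹` (Lemma 2.4 / Lemma `lem1`). -/
theorem measure_B1_le (c₀ : ℝ) (hc₀ : 1 ≤ c₀) :
    ∃ C : ℝ, 0 < C ∧
      ∀ (τ ξ : ℝ) (q : ℤ) (K₁ K₂ M₁ M₂ : ℝ) (I₁ I₂ : Set ℝ),
        0 < ξ → 1 ≤ K₁ → 1 ≤ K₂ → 1 ≤ M₁ → 1 ≤ M₂ →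
        I₁.OrdConnected → I₂.OrdConnected →
        ((volume : Measure ℝ).prod Measure.count)
            {p : ℝ × ℤ | p.1 ∈ I₁ ∧ ξ - p.1 ∈ I₂ ∧
              M₁ ≤ p.1 ∧ p.1 ≤ 2 * M₁ ∧ M₂ ≤ ξ - p.1 ∧ ξ - p.1 ≤ 2 * M₂ ∧
              jb (τ - ξ ^ 3 + (q : ℝ) ^ 2 / ξ + 3 * ξ * p.1 * (ξ - p.1) +
                  (ξ * (p.2 : ℝ) - p.1 * (q : ℝ)) ^ 2 /
                    (ξ * p.1 * (ξ - p.1))) ≤ c₀ * max K₁ K₂ ∧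
              |(p.2 : ℝ) / p.1 - ((q : ℝ) - (p.2 : ℝ)) / (ξ - p.1)| ≤ 1} ≤
          ENNReal.ofReal
            (C * (max K₁ K₂) ^ ((1 : ℝ) / 2) * (min M₁ M₂) ^ ((1 : ℝ) / 2)) := by
  refine ⟨22 * c₀, by linarith, ?_⟩
  intro τ ξ q K₁ K₂ M₁ M₂ I₁ I₂ hξ hK₁ hK₂ hM₁ hM₂ hI₁ hI₂
  set K := max K₁ K₂ with hKdef
  set m := min M₁ M₂ with hmdef
  have hK1 : (1:ℝ) ≤ K := le_trans hK₁ (le_max_left _ _)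
  have hm1 : (1:ℝ) ≤ m := le_min hM₁ hM₂
  have hmM₁ : m ≤ M₁ := min_le_left _ _
  have hmM₂ : m ≤ M₂ := min_le_right _ _
  have hcK1 : (1:ℝ) ≤ c₀ * K := by nlinarith
  set σ : ℝ := ξ ^ 3 - τ - (q : ℝ) ^ 2 / ξ with hσdef
  clear_value K m σ
  set S : Set ℝ := {x | M₁ ≤ x ∧ x ≤ 2 * M₁ ∧ M₂ ≤ ξ - x ∧ ξ - x ≤ 2 * M₂ ∧
      σ - c₀ * K - 2 * m ≤ 3 * ξ * (x * (ξ - x)) ∧ 3 * ξ * (x * (ξ - x)) ≤ σ + c₀ * K}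
      with hSdef
  set B' : Set (ℝ × ℤ) := {p | p.1 ∈ S ∧
      |τ - ξ ^ 3 + (q : ℝ) ^ 2 / ξ + 3 * ξ * p.1 * (ξ - p.1) +
        (ξ * (p.2 : ℝ) - p.1 * (q : ℝ)) ^ 2 / (ξ * p.1 * (ξ - p.1))| ≤ c₀ * K ∧
      |(p.2 : ℝ) / p.1 - ((q : ℝ) - (p.2 : ℝ)) / (ξ - p.1)| ≤ 1} with hB'def
  -- basic facts on S
  have hSfacts : ∀ x ∈ S, 0 < x ∧ 0 < ξ - x ∧ x * (ξ - x) / ξ ≤ 2 * m := by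
    intro x hx
    obtain ⟨h1, h2, h3, h4, h5, h6⟩ := hx
    have hx0 : 0 < x := by linarith
    have hξx : 0 < ξ - x := by linarith
    refine ⟨hx0, hξx, ?_⟩
    have ha : x * (ξ - x) / ξ ≤ x := by
      rw [div_le_iff₀ hξ]; nlinarith
    have hb : x * (ξ - x) / ξ ≤ ξ - x := by
      rw [div_le_iff₀ hξ]; nlinarith
    rcases le_total M₁ M₂ with h | h
    · have : m = M₁ := hmdef.trans (min_eq_left h)
      linarith
    · have : m = M₂ := hmdef.trans (min_eq_right h)
      linarith
  -- inclusion of the original set in B'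
  have hBB' : {p : ℝ × ℤ | p.1 ∈ I₁ ∧ ξ - p.1 ∈ I₂ ∧
      M₁ ≤ p.1 ∧ p.1 ≤ 2 * M₁ ∧ M₂ ≤ ξ - p.1 ∧ ξ - p.1 ≤ 2 * M₂ ∧
      jb (τ - ξ ^ 3 + (q : ℝ) ^ 2 / ξ + 3 * ξ * p.1 * (ξ - p.1) +
          (ξ * (p.2 : ℝ) - p.1 * (q : ℝ)) ^ 2 /
            (ξ * p.1 * (ξ - p.1))) ≤ c₀ * K ∧
      |(p.2 : ℝ) / p.1 - ((q : ℝ) - (p.2 : ℝ)) / (ξ - p.1)| ≤ 1} ⊆ B' := by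
    rintro ⟨x, n⟩ ⟨-, -, h1, h2, h3, h4, h5, h6⟩
    have hx0 : 0 < x := by linarith
    have hξx : 0 < ξ - x := by linarith
    have habs : |τ - ξ ^ 3 + (q : ℝ) ^ 2 / ξ + 3 * ξ * x * (ξ - x) +
        (ξ * (n : ℝ) - x * (q : ℝ)) ^ 2 / (ξ * x * (ξ - x))| ≤ c₀ * K := by
      refine le_trans ?_ h5
      rw [jb, ← Real.sqrt_sq_eq_abs]
      exact Real.sqrt_le_sqrt (by nlinarith)
    have hw6 := abs_le.1 h6
    have hwW : (n : ℝ) / x - ((q : ℝ) - (n : ℝ)) / (ξ - x)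
        = (ξ * (n : ℝ) - x * (q : ℝ)) / (x * (ξ - x)) := by
      field_simp; ring
    have heq : (ξ * (n : ℝ) - x * (q : ℝ)) ^ 2 / (ξ * x * (ξ - x))
        = ((n : ℝ) / x - ((q : ℝ) - (n : ℝ)) / (ξ - x)) ^ 2 * (x * (ξ - x) / ξ) := by
      rw [hwW]; field_simp
    have hw1 : ((n : ℝ) / x - ((q : ℝ) - (n : ℝ)) / (ξ - x)) ^ 2 ≤ 1 := by
      nlinarith [hw6.1, hw6.2]
    have hu2m : x * (ξ - x) / ξ ≤ 2 * m := by
      have ha : x * (ξ - x) / ξ ≤ x := by rw [div_le_iff₀ hξ]; nlinarith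
      have hb : x * (ξ - x) / ξ ≤ ξ - x := by rw [div_le_iff₀ hξ]; nlinarith
      rcases le_total M₁ M₂ with h | h
      · have : m = M₁ := hmdef.trans (min_eq_left h)
        linarith
      · have : m = M₂ := hmdef.trans (min_eq_right h)
        linarith
    have hu0 : 0 ≤ x * (ξ - x) / ξ := by positivity
    have he0 : 0 ≤ ((n : ℝ) / x - ((q : ℝ) - (n : ℝ)) / (ξ - x)) ^ 2 * (x * (ξ - x) / ξ) := by
      positivity
    have he2m : ((n : ℝ) / x - ((q : ℝ) - (n : ℝ)) / (ξ - x)) ^ 2 * (x * (ξ - x) / ξ)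
        ≤ 2 * m := by nlinarith
    have hid : τ - ξ ^ 3 + (q : ℝ) ^ 2 / ξ + 3 * ξ * x * (ξ - x) +
        (ξ * (n : ℝ) - x * (q : ℝ)) ^ 2 / (ξ * x * (ξ - x))
        = 3 * ξ * (x * (ξ - x))
          + ((n : ℝ) / x - ((q : ℝ) - (n : ℝ)) / (ξ - x)) ^ 2 * (x * (ξ - x) / ξ) - σ := by
      rw [heq, hσdef]; ring
    have hEabs := abs_le.1 habs
    rw [hid] at hEabs
    have hg1 : σ - c₀ * K - 2 * m ≤ 3 * ξ * (x * (ξ - x)) := by nlinarith [hEabs.1, he2m]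
    have hg2 : 3 * ξ * (x * (ξ - x)) ≤ σ + c₀ * K := by nlinarith [hEabs.2, he0]
    exact ⟨⟨h1, h2, h3, h4, hg1, hg2⟩, habs, h6⟩
  -- measurability
  have hmeasS : MeasurableSet S := by
    rw [hSdef]
    repeat rw [Set.setOf_and]
    refine (measurableSet_le measurable_const measurable_id).inter
      ((measurableSet_le measurable_id measurable_const).inter
      ((measurableSet_le measurable_const (by fun_prop)).inter
      ((measurableSet_le (by fun_prop) measurable_const).inter
      ((measurableSet_le measurable_const (by fun_prop)).inter
      (measurableSet_le (by fun_prop) measurable_const)))))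
  have hmeasB' : MeasurableSet B' := by
    rw [hB'def]
    repeat rw [Set.setOf_and]
    refine (hmeasS.preimage measurable_fst).inter
      ((measurableSet_le (by fun_prop) measurable_const).inter
       (measurableSet_le (by fun_prop) measurable_const))
  -- the slice count bound
  set N₀ : ℝ≥0∞ := ENNReal.ofReal (min (5 * m) (6 * Real.sqrt (c₀ * K * m))) with hN₀def
  have hcK0 : (0:ℝ) ≤ c₀ * K := by linarith
  have hsqcK1 : (1:ℝ) ≤ Real.sqrt (c₀ * K * m) := by
    rw [show (1:ℝ) = Real.sqrt 1 from Real.sqrt_one.symm]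
    exact Real.sqrt_le_sqrt (by nlinarith)
  have hslice : ∀ x : ℝ, Measure.count (Prod.mk x ⁻¹' B') ≤ S.indicator (fun _ => N₀) x := by
    intro x
    by_cases hxS : x ∈ S
    · rw [Set.indicator_of_mem hxS]
      obtain ⟨hx0, hξx, hu2m⟩ := hSfacts x hxS
      have hu0 : 0 < x * (ξ - x) := mul_pos hx0 hξx
      have hD0 : 0 < ξ * x * (ξ - x) := mul_pos (mul_pos hξ hx0) hξx
      -- (a) count via |w| ≤ 1
      have hcountA : Measure.count (Prod.mk x ⁻¹' B') ≤ ENNReal.ofReal (5 * m) := by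
        have hsubA : Prod.mk x ⁻¹' B' ⊆ {n : ℤ |
            ((q:ℝ) * x - x * (ξ - x)) / ξ ≤ (n:ℝ) ∧ (n:ℝ) ≤ ((q:ℝ) * x + x * (ξ - x)) / ξ} := by
          rintro n ⟨-, -, h6⟩
          have hwW : (n : ℝ) / x - ((q : ℝ) - (n : ℝ)) / (ξ - x)
              = (ξ * (n : ℝ) - x * (q : ℝ)) / (x * (ξ - x)) := by field_simp; ring
          rw [hwW, abs_div, abs_of_pos hu0, div_le_one hu0] at h6
          have h6' := abs_le.1 h6
          constructor
          · rw [div_le_iff₀ hξ]; linarith [h6'.1]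
          · rw [le_div_iff₀ hξ]; linarith [h6'.2]
        refine le_trans (measure_mono hsubA) (le_trans (count_int_Icc_le _ _) ?_)
        apply ENNReal.ofReal_le_ofReal
        have hd : ((q:ℝ) * x + x * (ξ - x)) / ξ - ((q:ℝ) * x - x * (ξ - x)) / ξ
            = 2 * (x * (ξ - x) / ξ) := by ring
        rw [hd]
        linarith
      -- (b) count via |E| ≤ c₀ K
      have hcountB : Measure.count (Prod.mk x ⁻¹' B')
          ≤ ENNReal.ofReal (6 * Real.sqrt (c₀ * K * m)) := by
        set P : ℝ := τ - ξ ^ 3 + (q : ℝ) ^ 2 / ξ + 3 * ξ * x * (ξ - x) with hPdef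
        set V : ℝ := (c₀ * K - P) * (ξ * x * (ξ - x)) with hVdef
        set U : ℝ := max 0 ((-(c₀ * K) - P) * (ξ * x * (ξ - x))) with hUdef
        have hsubB : Prod.mk x ⁻¹' B' ⊆
            {n : ℤ | ((q:ℝ) * x - Real.sqrt V) / ξ ≤ (n:ℝ) ∧
              (n:ℝ) ≤ ((q:ℝ) * x - Real.sqrt U) / ξ} ∪
            {n : ℤ | ((q:ℝ) * x + Real.sqrt U) / ξ ≤ (n:ℝ) ∧
              (n:ℝ) ≤ ((q:ℝ) * x + Real.sqrt V) / ξ} := by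
          rintro n ⟨-, h5, -⟩
          have h5' := abs_le.1 h5
          have hVle : (ξ * (n:ℝ) - x * (q:ℝ)) ^ 2 ≤ V := by
            rw [hVdef]
            have h2 := h5'.2
            have h3 : (ξ * (n:ℝ) - x * (q:ℝ)) ^ 2 / (ξ * x * (ξ - x)) ≤ c₀ * K - P := by
              rw [hPdef]; linarith
            rw [div_le_iff₀ hD0] at h3
            linarith [h3]
          have hUle : U ≤ (ξ * (n:ℝ) - x * (q:ℝ)) ^ 2 := by
            rw [hUdef]
            refine max_le (sq_nonneg _) ?_
            have h2 := h5'.1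
            have h3 : -(c₀ * K) - P ≤ (ξ * (n:ℝ) - x * (q:ℝ)) ^ 2 / (ξ * x * (ξ - x)) := by
              rw [hPdef]; linarith
            rw [le_div_iff₀ hD0] at h3
            linarith [h3]
          have habsV : |ξ * (n:ℝ) - x * (q:ℝ)| ≤ Real.sqrt V := by
            rw [← Real.sqrt_sq_eq_abs]; exact Real.sqrt_le_sqrt hVle
          have habsU : Real.sqrt U ≤ |ξ * (n:ℝ) - x * (q:ℝ)| := by
            rw [← Real.sqrt_sq_eq_abs]; exact Real.sqrt_le_sqrt hUle
          rcases le_or_gt 0 (ξ * (n:ℝ) - x * (q:ℝ)) with hW0 | hW0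
          · right
            rw [abs_of_nonneg hW0] at habsV habsU
            constructor
            · rw [div_le_iff₀ hξ]; linarith
            · rw [le_div_iff₀ hξ]; linarith
          · left
            rw [abs_of_neg hW0] at habsV habsU
            constructor
            · rw [div_le_iff₀ hξ]; linarith
            · rw [le_div_iff₀ hξ]; linarith
        -- length estimate
        have hL'0 : (0:ℝ) ≤ 2 * (c₀ * K) * (ξ * x * (ξ - x)) := by nlinarith
        have hdiff : Real.sqrt V - Real.sqrt U
            ≤ Real.sqrt (2 * (c₀ * K) * (ξ * x * (ξ - x))) := by
          rw [hUdef, hVdef]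
          refine sqrt_sub_max_le (le_of_eq (by ring)) (fun hlt => by nlinarith)
        have hs2 : Real.sqrt (2 * (c₀ * K) * (ξ * x * (ξ - x))) / ξ
            ≤ 2 * Real.sqrt (c₀ * K * m) := by
          have e2 : 2 * (c₀ * K) * (ξ * x * (ξ - x)) / ξ ^ 2
              = 2 * (c₀ * K) * (x * (ξ - x) / ξ) := by field_simp
          have e3 : Real.sqrt (2 * (c₀ * K) * (ξ * x * (ξ - x))) / ξ
              = Real.sqrt (2 * (c₀ * K) * (x * (ξ - x) / ξ)) := by
            rw [← e2, Real.sqrt_div hL'0, Real.sqrt_sq hξ.le]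
          rw [e3]
          have e4 : Real.sqrt (4 * (c₀ * K * m)) = 2 * Real.sqrt (c₀ * K * m) := by
            rw [show (4:ℝ) * (c₀ * K * m) = 2 ^ 2 * (c₀ * K * m) by ring,
              Real.sqrt_mul (by norm_num : (0:ℝ) ≤ 2 ^ 2), Real.sqrt_sq (by norm_num : (0:ℝ) ≤ 2)]
          rw [← e4]
          exact Real.sqrt_le_sqrt (by nlinarith)
        refine le_trans (measure_mono hsubB) (le_trans (measure_union_le _ _) ?_)
        have hc1 : Measure.count {n : ℤ | ((q:ℝ) * x - Real.sqrt V) / ξ ≤ (n:ℝ) ∧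
            (n:ℝ) ≤ ((q:ℝ) * x - Real.sqrt U) / ξ}
            ≤ ENNReal.ofReal (3 * Real.sqrt (c₀ * K * m)) := by
          refine le_trans (count_int_Icc_le _ _) (ENNReal.ofReal_le_ofReal ?_)
          have hd : ((q:ℝ) * x - Real.sqrt U) / ξ - ((q:ℝ) * x - Real.sqrt V) / ξ
              = (Real.sqrt V - Real.sqrt U) / ξ := by ring
          rw [hd]
          have h5 : (Real.sqrt V - Real.sqrt U) / ξ ≤ 2 * Real.sqrt (c₀ * K * m) :=
            le_trans ((div_le_div_iff_of_pos_right hξ).2 hdiff) hs2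
          linarith
        have hc2 : Measure.count {n : ℤ | ((q:ℝ) * x + Real.sqrt U) / ξ ≤ (n:ℝ) ∧
            (n:ℝ) ≤ ((q:ℝ) * x + Real.sqrt V) / ξ}
            ≤ ENNReal.ofReal (3 * Real.sqrt (c₀ * K * m)) := by
          refine le_trans (count_int_Icc_le _ _) (ENNReal.ofReal_le_ofReal ?_)
          have hd : ((q:ℝ) * x + Real.sqrt V) / ξ - ((q:ℝ) * x + Real.sqrt U) / ξ
              = (Real.sqrt V - Real.sqrt U) / ξ := by ring
          rw [hd]
          have h5 : (Real.sqrt V - Real.sqrt U) / ξ ≤ 2 * Real.sqrt (c₀ * K * m) :=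
            le_trans ((div_le_div_iff_of_pos_right hξ).2 hdiff) hs2
          linarith
        refine le_trans (add_le_add hc1 hc2) ?_
        rw [← ENNReal.ofReal_add (by positivity) (by positivity)]
        exact ENNReal.ofReal_le_ofReal (by linarith)
      rcases le_total (5 * m) (6 * Real.sqrt (c₀ * K * m)) with hmin | hmin
      · rw [hN₀def, min_eq_left hmin]; exact hcountA
      · rw [hN₀def, min_eq_right hmin]; exact hcountB
    · rw [Set.indicator_of_notMem hxS]
      have hempty : Prod.mk x ⁻¹' B' = ∅ := by
        ext n
        simp only [Set.mem_preimage, Set.mem_empty_iff_false, iff_false]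
        intro hmem
        exact hxS hmem.1
      rw [hempty, measure_empty]
  have hmain : (volume.prod Measure.count) B' ≤ N₀ * volume S := by
    rw [Measure.prod_apply hmeasB']
    calc ∫⁻ x, Measure.count (Prod.mk x ⁻¹' B') ∂volume
        ≤ ∫⁻ x, S.indicator (fun _ => N₀) x ∂volume := lintegral_mono hslice
      _ = N₀ * volume S := lintegral_indicator_const hmeasS N₀
  refine le_trans (measure_mono hBB') (le_trans hmain ?_)
  rcases Set.eq_empty_or_nonempty S with hSe | hSne
  · rw [hSe, measure_empty, mul_zero]
    exact zero_le
  obtain ⟨x₀, hx₀⟩ := hSne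
  obtain ⟨ha1, ha2, ha3, ha4, -, -⟩ := hx₀
  have hξ2m : 2 * m ≤ ξ := by linarith
  have hξne : ξ ≠ 0 := ne_of_gt hξ
  set u₀ : ℝ := ξ ^ 2 / 4 - (σ + c₀ * K) / (3 * ξ) with hu₀def
  set v₀ : ℝ := ξ ^ 2 / 4 - (σ - c₀ * K - 2 * m) / (3 * ξ) with hv₀def
  have h3ξ : (0:ℝ) < 3 * ξ := by linarith
  have hsubS : S ⊆ Set.Icc (ξ/2 - Real.sqrt v₀) (ξ/2 - Real.sqrt (max 0 u₀)) ∪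
      Set.Icc (ξ/2 + Real.sqrt (max 0 u₀)) (ξ/2 + Real.sqrt v₀) := by
    intro x hx
    obtain ⟨-, -, -, -, hA, hB⟩ := hx
    have hx1 : (σ - c₀ * K - 2 * m) / (3 * ξ) ≤ x * (ξ - x) := by
      rw [div_le_iff₀ h3ξ]; linarith
    have hx2 : x * (ξ - x) ≤ (σ + c₀ * K) / (3 * ξ) := by
      rw [le_div_iff₀ h3ξ]; linarith
    have hxv : (x - ξ/2) ^ 2 ≤ v₀ := by
      rw [hv₀def]; nlinarith [hx1]
    have hxu : u₀ ≤ (x - ξ/2) ^ 2 := by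
      rw [hu₀def]; nlinarith [hx2]
    have h0u : max 0 u₀ ≤ (x - ξ/2) ^ 2 := max_le (sq_nonneg _) hxu
    have hs1 : Real.sqrt (max 0 u₀) ≤ |x - ξ/2| := by
      rw [← Real.sqrt_sq_eq_abs]; exact Real.sqrt_le_sqrt h0u
    have hs2 : |x - ξ/2| ≤ Real.sqrt v₀ := by
      rw [← Real.sqrt_sq_eq_abs]; exact Real.sqrt_le_sqrt hxv
    rcases le_or_gt x (ξ/2) with hhalf | hhalf
    · left
      rw [abs_of_nonpos (by linarith)] at hs1 hs2
      exact ⟨by linarith, by linarith⟩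
    · right
      rw [abs_of_pos (by linarith)] at hs1 hs2
      exact ⟨by linarith, by linarith⟩
  have hdS : Real.sqrt v₀ - Real.sqrt (max 0 u₀)
      ≤ Real.sqrt ((2 * c₀ * K + 2 * m) / (3 * ξ)) := by
    rw [hu₀def, hv₀def]
    refine sqrt_sub_max_le (le_of_eq ?_) (fun hlt => ?_)
    · field_simp
      ring
    · have he : ξ ^ 2 / 4 - (σ - c₀ * K - 2 * m) / (3 * ξ)
          = (ξ ^ 2 / 4 - (σ + c₀ * K) / (3 * ξ)) + (2 * c₀ * K + 2 * m) / (3 * ξ) := by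
        field_simp
        ring
      linarith [he]
  have hvolS : volume S ≤ ENNReal.ofReal (2 * Real.sqrt ((2 * c₀ * K + 2 * m) / (3 * ξ))) := by
    refine le_trans (measure_mono hsubS) (le_trans (measure_union_le _ _) ?_)
    rw [Real.volume_Icc, Real.volume_Icc]
    have e1 : ξ/2 - Real.sqrt (max 0 u₀) - (ξ/2 - Real.sqrt v₀)
        = Real.sqrt v₀ - Real.sqrt (max 0 u₀) := by ring
    have e2 : ξ/2 + Real.sqrt v₀ - (ξ/2 + Real.sqrt (max 0 u₀))
        = Real.sqrt v₀ - Real.sqrt (max 0 u₀) := by ring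
    rw [e1, e2]
    calc ENNReal.ofReal (Real.sqrt v₀ - Real.sqrt (max 0 u₀))
          + ENNReal.ofReal (Real.sqrt v₀ - Real.sqrt (max 0 u₀))
        ≤ ENNReal.ofReal (Real.sqrt ((2 * c₀ * K + 2 * m) / (3 * ξ)))
          + ENNReal.ofReal (Real.sqrt ((2 * c₀ * K + 2 * m) / (3 * ξ))) :=
          add_le_add (ENNReal.ofReal_le_ofReal hdS) (ENNReal.ofReal_le_ofReal hdS)
      _ = ENNReal.ofReal (2 * Real.sqrt ((2 * c₀ * K + 2 * m) / (3 * ξ))) := by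
          rw [← ENNReal.ofReal_add (Real.sqrt_nonneg _) (Real.sqrt_nonneg _)]
          ring_nf
  calc N₀ * volume S
      ≤ ENNReal.ofReal (min (5 * m) (6 * Real.sqrt (c₀ * K * m)))
        * ENNReal.ofReal (2 * Real.sqrt ((2 * c₀ * K + 2 * m) / (3 * ξ))) := by
        rw [hN₀def]; exact mul_le_mul_right hvolS _
    _ = ENNReal.ofReal (min (5 * m) (6 * Real.sqrt (c₀ * K * m))
        * (2 * Real.sqrt ((2 * c₀ * K + 2 * m) / (3 * ξ)))) := by
        rw [← ENNReal.ofReal_mul (le_min (by linarith) (by positivity))]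
    _ ≤ ENNReal.ofReal (22 * c₀ * Real.sqrt K * Real.sqrt m) :=
        ENNReal.ofReal_le_ofReal (final_real hc₀ hK1 hm1 hξ2m)
    _ = ENNReal.ofReal (22 * c₀ * K ^ ((1:ℝ)/2) * m ^ ((1:ℝ)/2)) := by
        rw [Real.sqrt_eq_rpow, Real.sqrt_eq_rpow]
end

section
/- For every c₀ ≥ 1 and every ε ∈ (0, 1) there exists a constant C > 0 (depending only on c₀ and ε) with the following property. Let τ ∈ ℝ, ξ > 0, q ∈ ℤ, K₁, K₂ ≥ 1, M₁, M₂ ≥ 1, and let I₁, I₂ be bounded intervals. Let B^{2,3} be the set of (ξ₁, q₁) ∈ ℝ×ℤ such that ξ₁ ∈ I₁, ξ − ξ₁ ∈ I₂, M₁ ≤ ξ₁ ≤ 2M₁, M₂ ≤ ξ − ξ₁ ≤ 2M₂, ⟨τ − ξ³ + q²/ξ + 3 ξ ξ₁ (ξ − ξ₁) + (ξ q₁ − ξ₁ q)²/(ξ ξ₁ (ξ − ξ₁))⟩ ≤ c₀ (K₁∨K₂), and |q₁/ξ₁ − (q − q₁)/(ξ − ξ₁)| ≥ max(1, (K₁∨K₂)^{1/2}/(M₁∧M₂)^{1/2},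 (M₁∨M₂)^{1/2}/(M₁∧M₂)^{1/2}). Then μ(B^{2,3}) ≤ C · [ (M₁∧M₂)^{1/2+ε/2} (M₁∨M₂)^{−1/2+ε/2} (K₁∨K₂) + |I₁|∧|I₂| ]. -/
open MeasureTheory
open scoped ENNReal NNReal

lemma count_int_interval (a b : ℝ) :
    Measure.count {n : ℤ | a ≤ (n:ℝ) ∧ (n:ℝ) ≤ b} ≤ ENNReal.ofReal (b - a) + 1 := by
  have hsub : {n : ℤ | a ≤ (n:ℝ) ∧ (n:ℝ) ≤ b} ⊆ (↑(Finset.Icc ⌈a⌉ ⌊b⌋) : Set ℤ) := by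
    intro n hn
    simp only [Finset.coe_Icc, Set.mem_Icc]
    exact ⟨Int.ceil_le.mpr hn.1, Int.le_floor.mpr hn.2⟩
  refine le_trans (measure_mono hsub) ?_
  rw [Measure.count_apply_finset, Int.card_Icc]
  by_cases hle : ⌈a⌉ ≤ ⌊b⌋
  · have h1 : (⌊b⌋ + 1 - ⌈a⌉).toNat = (⌊b⌋ - ⌈a⌉).toNat + 1 := by omega
    rw [h1]
    push_cast
    have h2 : ((⌊b⌋ - ⌈a⌉).toNat : ℝ≥0∞) ≤ ENNReal.ofReal (b - a) := by
      rw [show ((⌊b⌋ - ⌈a⌉).toNat : ℝ≥0∞) = ENNReal.ofReal (((⌊b⌋ - ⌈a⌉).toNat : ℕ) : ℝ) from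
        (ENNReal.ofReal_natCast _).symm]
      apply ENNReal.ofReal_le_ofReal
      have h3 : (((⌊b⌋ - ⌈a⌉).toNat : ℕ) : ℝ) = ((⌊b⌋ : ℝ) - (⌈a⌉ : ℝ)) := by
        have h4 : ((⌊b⌋ - ⌈a⌉).toNat : ℤ) = ⌊b⌋ - ⌈a⌉ := by omega
        calc (((⌊b⌋ - ⌈a⌉).toNat : ℕ) : ℝ) = (((⌊b⌋ - ⌈a⌉).toNat : ℤ) : ℝ) := by push_cast; ring
        _ = _ := by rw [h4]; push_cast; ring
      rw [h3]
      have := Int.floor_le b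
      have := Int.le_ceil a
      linarith
    exact add_le_add_left h2 1
  · have h0 : (⌊b⌋ + 1 - ⌈a⌉).toNat = 0 := by omega
    rw [h0]
    simp

lemma parabola_window (ξ a w : ℝ) (hw : 0 ≤ w) :
    volume {u : ℝ | a < u * (ξ - u) ∧ u * (ξ - u) ≤ a + w} ≤ ENNReal.ofReal (2 * Real.sqrt w) := by
  set c := ξ / 2 with hc
  set Bv := ξ ^ 2 / 4 - a with hBv
  set s := Real.sqrt (max (Bv - w) 0) with hs
  set S := Real.sqrt (max Bv 0) with hS
  have hs0 : 0 ≤ s := Real.sqrt_nonneg _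
  have hsS : s ≤ S := Real.sqrt_le_sqrt (max_le_max (by linarith) le_rfl)
  have hsub : {u : ℝ | a < u * (ξ - u) ∧ u * (ξ - u) ≤ a + w} ⊆
      Set.Icc (c - S) (c - s) ∪ Set.Icc (c + s) (c + S) := by
    intro u hu
    obtain ⟨h1, h2⟩ := hu
    have key : u * (ξ - u) = ξ ^ 2 / 4 - (u - c) ^ 2 := by rw [hc]; ring
    have hq1 : (u - c) ^ 2 < Bv := by rw [hBv]; nlinarith [key]
    have hq2 : Bv - w ≤ (u - c) ^ 2 := by rw [hBv]; nlinarith [key]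
    have habs1 : |u - c| ≤ S := by
      rw [hS]
      have h5 : (u-c)^2 ≤ max Bv 0 := le_max_of_le_left hq1.le
      calc |u - c| = Real.sqrt ((u-c)^2) := (Real.sqrt_sq_eq_abs _).symm
      _ ≤ _ := Real.sqrt_le_sqrt h5
    have habs2 : s ≤ |u - c| := by
      rw [hs]
      have h6 : max (Bv - w) 0 ≤ (u-c)^2 := max_le hq2 (sq_nonneg _)
      calc Real.sqrt (max (Bv - w) 0) ≤ Real.sqrt ((u-c)^2) := Real.sqrt_le_sqrt h6
      _ = |u - c| := Real.sqrt_sq_eq_abs _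
    rcases abs_le.mp habs1 with ⟨hl, hr⟩
    rcases le_abs.mp habs2 with h | h
    · right; constructor <;> [linarith; linarith]
    · left; constructor <;> [linarith; linarith]
  have hSs : S - s ≤ Real.sqrt w := by
    have h1 : max Bv 0 ≤ max (Bv - w) 0 + w := by
      rcases le_total Bv 0 with h | h
      · simp [max_eq_right h]; positivity
      · rcases le_total (Bv - w) 0 with h' | h'
        · rw [max_eq_left h, max_eq_right h']; linarith
        · rw [max_eq_left h, max_eq_left h']; linarith
    have h2 : S ≤ Real.sqrt (max (Bv - w) 0 + w) := Real.sqrt_le_sqrt h1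
    have h3 : Real.sqrt (max (Bv - w) 0 + w) ≤ s + Real.sqrt w := by
      have h4 : max (Bv - w) 0 + w ≤ (s + Real.sqrt w) ^ 2 := by
        have hss : s ^ 2 = max (Bv - w) 0 := Real.sq_sqrt (le_max_right _ _)
        have hww : Real.sqrt w ^ 2 = w := Real.sq_sqrt hw
        nlinarith [mul_nonneg hs0 (Real.sqrt_nonneg w)]
      calc Real.sqrt (max (Bv - w) 0 + w) ≤ Real.sqrt ((s + Real.sqrt w) ^ 2) :=
        Real.sqrt_le_sqrt h4
      _ = s + Real.sqrt w := Real.sqrt_sq (by positivity)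
    linarith
  calc volume {u : ℝ | a < u * (ξ - u) ∧ u * (ξ - u) ≤ a + w}
      ≤ volume (Set.Icc (c - S) (c - s) ∪ Set.Icc (c + s) (c + S)) := measure_mono hsub
    _ ≤ volume (Set.Icc (c - S) (c - s)) + volume (Set.Icc (c + s) (c + S)) := measure_union_le _ _
    _ = ENNReal.ofReal (S - s) + ENNReal.ofReal (S - s) := by
        rw [Real.volume_Icc, Real.volume_Icc]
        congr 1 <;> congr 1 <;> ring
    _ ≤ ENNReal.ofReal (Real.sqrt w) + ENNReal.ofReal (Real.sqrt w) :=
        add_le_add (ENNReal.ofReal_le_ofReal hSs) (ENNReal.ofReal_le_ofReal hSs)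
    _ = ENNReal.ofReal (2 * Real.sqrt w) := by
        rw [← ENNReal.ofReal_add (Real.sqrt_nonneg w) (Real.sqrt_nonneg w)]; congr 1; ring

instance inst_s15 : SigmaFinite (Measure.count : Measure ℤ) := by
  constructor
  refine ⟨⟨fun n => {m : ℤ | |m| ≤ n}, fun _ => trivial, fun n => ?_, ?_⟩⟩
  · have hfin : {m : ℤ | |m| ≤ n}.Finite := by
      have : {m : ℤ | |m| ≤ n} ⊆ Set.Icc (-(n:ℤ)) n := by
        intro m hm; simp only [Set.mem_setOf_eq] at hm
        rw [Set.mem_Icc]; exact abs_le.mp hm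
      exact (Set.finite_Icc _ _).subset this
    rw [Measure.count_apply_finite _ hfin]
    exact ENNReal.natCast_lt_top _
  · ext m; simp only [Set.mem_iUnion, Set.mem_setOf_eq, Set.mem_univ, iff_true]
    exact ⟨m.natAbs, by rw [Int.abs_eq_natAbs]⟩

lemma rpow_interp {x y z ε : ℝ} (hx : 0 < x) (hy : 0 ≤ y) (hz : 0 ≤ z)
    (hε0 : 0 ≤ ε) (hε1 : ε ≤ 1) (h1 : y ≤ x) (h2 : z ≤ x) :
    y ^ ε * z ^ (1 - ε) ≤ x := by
  calc y ^ ε * z ^ (1-ε) ≤ x ^ ε * x ^ (1-ε) := by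
        apply mul_le_mul (Real.rpow_le_rpow hy h1 hε0) (Real.rpow_le_rpow hz h2 (by linarith))
          (Real.rpow_nonneg hz _) (Real.rpow_nonneg (le_trans hy h1) _)
  _ = x ^ (ε + (1-ε)) := (Real.rpow_add hx _ _).symm
  _ = x := by norm_num
set_option maxHeartbeats 1000000 in
/-- size estimate for the region `B^{2,3}` (Lemma 2.6). -/
theorem measure_B23_le (c₀ : ℝ) (hc₀ : 1 ≤ c₀) (ε : ℝ) (hε0 : 0 < ε) (hε1 : ε < 1) :
    ∃ C : ℝ, 0 < C ∧
      ∀ (τ ξ : ℝ) (q : ℤ) (K₁ K₂ M₁ M₂ : ℝ) (I₁ I₂ : Set ℝ),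
        0 < ξ → 1 ≤ K₁ → 1 ≤ K₂ → 1 ≤ M₁ → 1 ≤ M₂ →
        I₁.OrdConnected → Bornology.IsBounded I₁ →
        I₂.OrdConnected → Bornology.IsBounded I₂ →
        ((volume : Measure ℝ).prod Measure.count)
            {p : ℝ × ℤ | p.1 ∈ I₁ ∧ ξ - p.1 ∈ I₂ ∧
              M₁ ≤ p.1 ∧ p.1 ≤ 2 * M₁ ∧ M₂ ≤ ξ - p.1 ∧ ξ - p.1 ≤ 2 * M₂ ∧
              jb (τ - ξ ^ 3 + (q : ℝ) ^ 2 / ξ + 3 * ξ * p.1 * (ξ - p.1) +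
                  (ξ * (p.2 : ℝ) - p.1 * (q : ℝ)) ^ 2 /
                    (ξ * p.1 * (ξ - p.1))) ≤ c₀ * max K₁ K₂ ∧
              max (max 1 ((max K₁ K₂) ^ ((1 : ℝ) / 2) / (min M₁ M₂) ^ ((1 : ℝ) / 2)))
                  ((max M₁ M₂) ^ ((1 : ℝ) / 2) / (min M₁ M₂) ^ ((1 : ℝ) / 2)) ≤
                |(p.2 : ℝ) / p.1 - ((q : ℝ) - (p.2 : ℝ)) / (ξ - p.1)|} ≤
          ENNReal.ofReal
            (C * ((min M₁ M₂) ^ ((1 : ℝ) / 2 + ε / 2) *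
                (max M₁ M₂) ^ (-(1 : ℝ) / 2 + ε / 2) * max K₁ K₂ +
              min (volume I₁).toReal (volume I₂).toReal)) := by
  have hc₀0 : 0 < c₀ := lt_of_lt_of_le one_pos hc₀
  set r : ℝ := (2:ℝ) ^ (-(ε/2)) with hr_def
  have hr0 : 0 < r := Real.rpow_pos_of_pos two_pos _
  have hr1 : r < 1 := Real.rpow_lt_one_of_one_lt_of_neg one_lt_two (by linarith)
  have hA0 : 0 < (1 - r)⁻¹ := inv_pos.mpr (by linarith)
  have hCpos : 0 < 8*c₀^2 + 8*c₀*(1-r)⁻¹ + 4 := by nlinarith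
  refine ⟨8*c₀^2 + 8*c₀*(1-r)⁻¹ + 4, hCpos, ?_⟩
  intro τ ξ q K₁ K₂ M₁ M₂ I₁ I₂ hξ0 hK₁ hK₂ hM₁ hM₂ hI₁oc hI₁b hI₂oc hI₂b
  set K := max K₁ K₂ with hK_def
  set mn := min M₁ M₂ with hmn_def
  set Mx := max M₁ M₂ with hMx_def
  set d₀ := max (max 1 (K ^ ((1:ℝ)/2) / mn ^ ((1:ℝ)/2))) (Mx ^ ((1:ℝ)/2) / mn ^ ((1:ℝ)/2))
    with hd₀_def
  have hK1 : 1 ≤ K := le_trans hK₁ (le_max_left _ _)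
  have hK0 : 0 < K := lt_of_lt_of_le one_pos hK1
  have hmn1 : 1 ≤ mn := le_min hM₁ hM₂
  have hmn0 : 0 < mn := lt_of_lt_of_le one_pos hmn1
  have hMx1 : 1 ≤ Mx := le_trans hM₁ (le_max_left _ _)
  have hMx0 : 0 < Mx := lt_of_lt_of_le one_pos hMx1
  have hmnMx : mn ≤ Mx := min_le_max
  have hprodmM : mn * Mx = M₁ * M₂ := min_mul_max M₁ M₂
  have hd₀1 : 1 ≤ d₀ := le_trans (le_max_left _ _) (le_max_left _ _)
  have hd₀0 : 0 < d₀ := lt_of_lt_of_le one_pos hd₀1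
  have hsqKm : Real.sqrt (K/mn) ≤ d₀ := by
    have h : K ^ ((1:ℝ)/2) / mn ^ ((1:ℝ)/2) = Real.sqrt (K/mn) := by
      rw [Real.sqrt_div hK0.le, Real.sqrt_eq_rpow, Real.sqrt_eq_rpow]
    rw [← h]; exact le_trans (le_max_right _ _) (le_max_left _ _)
  have hsqMm : Real.sqrt (Mx/mn) ≤ d₀ := by
    have h : Mx ^ ((1:ℝ)/2) / mn ^ ((1:ℝ)/2) = Real.sqrt (Mx/mn) := by
      rw [Real.sqrt_div hMx0.le, Real.sqrt_eq_rpow, Real.sqrt_eq_rpow]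
    rw [← h]; exact le_max_right _ _
  -- main objects
  set Θ := ξ^4 - τ*ξ - (q:ℝ)^2 - c₀*K*ξ with hΘ_def
  set hh := 2*c₀*K*ξ with hhh_def
  have hhh0 : 0 < hh := by rw [hhh_def]; positivity
  set Pf : ℝ → ℝ := fun u => u * (ξ - u) with hPf_def
  set Xf : ℝ → ℝ := fun u => Θ * Pf u - 3*ξ^2*(Pf u)^2 with hXf_def
  set rf : ℝ → ℝ := fun u => Real.sqrt (max (Xf u) ((d₀ * Pf u)^2)) with hrf_def
  set Rf : ℝ → ℝ := fun u => Real.sqrt (Xf u + hh * Pf u) with hRf_def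
  set tt : ℕ → ℝ := fun j => 3*ξ^2 + 2^j * d₀^2 with htt_def
  have htt0 : ∀ j, 0 < tt j := by intro j; rw [htt_def]; positivity
  set cond : ℝ → ℤ → Prop := fun u n =>
      (((q:ℝ)*u + rf u)/ξ ≤ (n:ℝ) ∧ (n:ℝ) ≤ ((q:ℝ)*u + Rf u)/ξ) ∨
      (((q:ℝ)*u - Rf u)/ξ ≤ (n:ℝ) ∧ (n:ℝ) ≤ ((q:ℝ)*u - rf u)/ξ) with hcond_def
  set S' : Set ℝ := {u | u ∈ I₁ ∧ ξ - u ∈ I₂ ∧ M₁ ≤ u ∧ u ≤ 2*M₁ ∧ M₂ ≤ ξ - u ∧ ξ - u ≤ 2*M₂}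
    with hS'_def
  set LSlow : Set ℝ := {u | u ∈ S' ∧ Θ < tt 0 * Pf u ∧ tt 0 * Pf u ≤ Θ + hh} with hLSlow_def
  set LS : ℕ → Set ℝ := fun j => {u | u ∈ S' ∧ tt j * Pf u ≤ Θ ∧ Θ < tt (j+1) * Pf u} with hLS_def
  set Fs : Set ℝ → Set (ℝ × ℤ) := fun L => {p | p.1 ∈ L ∧ cond p.1 p.2} with hFs_def
  -- facts about S'
  have hS'facts : ∀ u ∈ S', 0 < u ∧ 0 < ξ - u ∧ 0 < Pf u ∧ mn * Mx ≤ Pf u ∧ Pf u ≤ 4*(mn*Mx) := by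
    intro u hu
    obtain ⟨_, _, h3, h4, h5, h6⟩ := hu
    have hu0 : 0 < u := lt_of_lt_of_le (lt_of_lt_of_le one_pos hM₁) h3
    have hv0 : 0 < ξ - u := lt_of_lt_of_le (lt_of_lt_of_le one_pos hM₂) h5
    refine ⟨hu0, hv0, ?_, ?_, ?_⟩
    · rw [hPf_def]; exact mul_pos hu0 hv0
    · rw [hprodmM, hPf_def]
      exact mul_le_mul h3 h5 (by linarith) (by linarith)
    · rw [hprodmM, hPf_def]
      calc u * (ξ - u) ≤ (2*M₁) * (2*M₂) := by
            apply mul_le_mul h4 h6 (by linarith) (by linarith)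
      _ = 4 * (M₁ * M₂) := by ring
  -- measurability
  have hPfc : Continuous Pf := by
    rw [hPf_def]; exact continuous_id.mul (continuous_const.sub continuous_id)
  have hXfc : Continuous Xf := by
    rw [hXf_def]; exact (continuous_const.mul hPfc).sub (continuous_const.mul (hPfc.pow 2))
  have hrfc : Continuous rf := by
    rw [hrf_def]
    exact Real.continuous_sqrt.comp (hXfc.max ((continuous_const.mul hPfc).pow 2))
  have hRfc : Continuous Rf := by
    rw [hRf_def]
    exact Real.continuous_sqrt.comp (hXfc.add (continuous_const.mul hPfc))
  have hmsub : Measurable (fun u : ℝ => ξ - u) := measurable_const.sub measurable_id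
  have hS'm : MeasurableSet S' := by
    have hEq : S' = I₁ ∩ ((fun u : ℝ => ξ - u) ⁻¹' I₂) ∩ (Set.Icc M₁ (2*M₁)) ∩
        ((fun u : ℝ => ξ - u) ⁻¹' (Set.Icc M₂ (2*M₂))) := by
      ext u
      simp only [hS'_def, Set.mem_setOf_eq, Set.mem_inter_iff, Set.mem_preimage, Set.mem_Icc]
      tauto
    rw [hEq]
    exact ((hI₁oc.measurableSet.inter (hmsub hI₂oc.measurableSet)).inter measurableSet_Icc).inter
      (hmsub measurableSet_Icc)
  have hLSm : ∀ j, MeasurableSet (LS j) := by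
    intro j
    have hEq : LS j = S' ∩ {u | tt j * Pf u ≤ Θ} ∩ {u | Θ < tt (j+1) * Pf u} := by
      ext u
      simp only [hLS_def, Set.mem_setOf_eq, Set.mem_inter_iff]
      tauto
    rw [hEq]
    exact (hS'm.inter (measurableSet_le ((continuous_const.mul hPfc).measurable)
      measurable_const)).inter
      (measurableSet_lt measurable_const ((continuous_const.mul hPfc).measurable))
  have hLSlowm : MeasurableSet LSlow := by
    have hEq : LSlow = S' ∩ {u | Θ < tt 0 * Pf u} ∩ {u | tt 0 * Pf u ≤ Θ + hh} := by
      ext u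
      simp only [hLSlow_def, Set.mem_setOf_eq, Set.mem_inter_iff]
      tauto
    rw [hEq]
    exact (hS'm.inter (measurableSet_lt measurable_const
      ((continuous_const.mul hPfc).measurable))).inter
      (measurableSet_le ((continuous_const.mul hPfc).measurable) measurable_const)
  have hgm : Measurable (fun p : ℝ × ℤ => ((p.2 : ℤ) : ℝ)) :=
    Measurable.comp measurable_from_top measurable_snd
  have hFm : ∀ L : Set ℝ, MeasurableSet L → MeasurableSet (Fs L) := by
    intro L hL
    have hEq : Fs L = (Prod.fst ⁻¹' L) ∩
        (({p : ℝ × ℤ | ((q:ℝ)*p.1 + rf p.1)/ξ ≤ ((p.2:ℤ):ℝ)} ∩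
          {p : ℝ × ℤ | ((p.2:ℤ):ℝ) ≤ ((q:ℝ)*p.1 + Rf p.1)/ξ}) ∪
         ({p : ℝ × ℤ | ((q:ℝ)*p.1 - Rf p.1)/ξ ≤ ((p.2:ℤ):ℝ)} ∩
          {p : ℝ × ℤ | ((p.2:ℤ):ℝ) ≤ ((q:ℝ)*p.1 - rf p.1)/ξ})) := by
      ext p
      simp only [hFs_def, hcond_def, Set.mem_setOf_eq, Set.mem_inter_iff, Set.mem_union,
        Set.mem_preimage]
    rw [hEq]
    have hm1 : Measurable (fun p : ℝ × ℤ => ((q:ℝ)*p.1 + rf p.1)/ξ) :=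
      (((measurable_fst.const_mul (q:ℝ)).add (hrfc.measurable.comp measurable_fst)).div_const ξ)
    have hm2 : Measurable (fun p : ℝ × ℤ => ((q:ℝ)*p.1 + Rf p.1)/ξ) :=
      (((measurable_fst.const_mul (q:ℝ)).add (hRfc.measurable.comp measurable_fst)).div_const ξ)
    have hm3 : Measurable (fun p : ℝ × ℤ => ((q:ℝ)*p.1 - Rf p.1)/ξ) :=
      (((measurable_fst.const_mul (q:ℝ)).sub (hRfc.measurable.comp measurable_fst)).div_const ξ)
    have hm4 : Measurable (fun p : ℝ × ℤ => ((q:ℝ)*p.1 - rf p.1)/ξ) :=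
      (((measurable_fst.const_mul (q:ℝ)).sub (hrfc.measurable.comp measurable_fst)).div_const ξ)
    exact (hL.preimage measurable_fst).inter
      (((measurableSet_le hm1 hgm).inter (measurableSet_le hgm hm2)).union
       ((measurableSet_le hm3 hgm).inter (measurableSet_le hgm hm4)))
  -- product measure bound via sections
  have hprod : ∀ L : Set ℝ, MeasurableSet L → ∀ N : ℝ≥0∞,
      (∀ u ∈ L, Measure.count {n : ℤ | cond u n} ≤ N) →
      (volume.prod Measure.count) (Fs L) ≤ N * volume L := by
    intro L hL N hN
    rw [Measure.prod_apply (hFm L hL)]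
    have hpt : ∀ u : ℝ, Measure.count (Prod.mk u ⁻¹' Fs L) ≤ L.indicator (fun _ => N) u := by
      intro u
      by_cases hu : u ∈ L
      · have hsub2 : (Prod.mk u ⁻¹' Fs L) ⊆ {n : ℤ | cond u n} := by
          intro n hn; exact hn.2
        rw [Set.indicator_of_mem hu]
        exact le_trans (measure_mono hsub2) (hN u hu)
      · have hemp : (Prod.mk u ⁻¹' Fs L) = ∅ := by
          ext n
          simp only [Set.mem_preimage, Set.mem_empty_iff_false, iff_false]
          intro hn; exact hu hn.1
        rw [hemp, Set.indicator_of_notMem hu]; simp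
    calc ∫⁻ u, Measure.count (Prod.mk u ⁻¹' Fs L) ≤ ∫⁻ u, L.indicator (fun _ => N) u :=
          lintegral_mono hpt
    _ = N * volume L := lintegral_indicator_const hL N
  -- counting lemma per section
  have hcount : ∀ u : ℝ, 0 < Pf u → ∀ z : ℝ, 0 < z → z * Pf u ≤ rf u →
      Measure.count {n : ℤ | cond u n} ≤ ENNReal.ofReal (2*c₀*K/z) + 2 := by
    intro u hPu z hz hzr
    have hrf0 : 0 < rf u := lt_of_lt_of_le (mul_pos hz hPu) hzr
    have hdiff : (Rf u - rf u)/ξ ≤ c₀*K/z := by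
      have h1 : Rf u - rf u ≤ hh * Pf u / (2 * rf u) := by
        rcases le_or_gt (Rf u) (rf u) with h | h
        · have h0 : 0 ≤ hh * Pf u / (2 * rf u) := by positivity
          linarith
        · have hX2 : 0 < Xf u + hh * Pf u := by
            by_contra hcon
            push_neg at hcon
            have hR0 : Rf u = 0 := by
              rw [hRf_def]; exact Real.sqrt_eq_zero'.mpr hcon
            rw [hR0] at h
            linarith
          have hR2 : (Rf u)^2 = Xf u + hh * Pf u := by
            rw [hRf_def]; exact Real.sq_sqrt hX2.le
          have hr2 : (rf u)^2 = max (Xf u) ((d₀ * Pf u)^2) := by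
            rw [hrf_def]; exact Real.sq_sqrt (le_max_of_le_right (sq_nonneg _))
          have hr2X : Xf u ≤ (rf u)^2 := by rw [hr2]; exact le_max_left _ _
          rw [le_div_iff₀ (by positivity : (0:ℝ) < 2 * rf u)]
          have key : (Rf u - rf u) * (2 * rf u) ≤ (Rf u - rf u) * (Rf u + rf u) := by
            apply mul_le_mul_of_nonneg_left (by linarith) (by linarith)
          have key2 : (Rf u - rf u) * (Rf u + rf u) = (Rf u)^2 - (rf u)^2 := by ring
          linarith
      have h2 : (Rf u - rf u)/ξ ≤ (hh * Pf u / (2 * rf u))/ξ := by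
        exact (div_le_div_iff_of_pos_right hξ0).mpr h1
      have h3 : hh * Pf u / (2 * rf u) / ξ ≤ c₀ * K / z := by
        have h4 : hh * Pf u / (2 * rf u) ≤ hh * Pf u / (2 * (z * Pf u)) := by
          apply div_le_div_of_nonneg_left (by positivity) (by positivity) (by linarith)
        have heq : hh * Pf u / (2 * (z * Pf u)) / ξ = c₀ * K / z := by
          rw [hhh_def]
          field_simp
        calc hh * Pf u / (2 * rf u) / ξ ≤ hh * Pf u / (2 * (z * Pf u)) / ξ :=
              (div_le_div_iff_of_pos_right hξ0).mpr h4
        _ = _ := heq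
      linarith
    have hWsub : {n : ℤ | cond u n} ⊆
        {n : ℤ | ((q:ℝ)*u + rf u)/ξ ≤ (n:ℝ) ∧ (n:ℝ) ≤ ((q:ℝ)*u + Rf u)/ξ} ∪
        {n : ℤ | ((q:ℝ)*u - Rf u)/ξ ≤ (n:ℝ) ∧ (n:ℝ) ≤ ((q:ℝ)*u - rf u)/ξ} := by
      intro n hn
      rcases hn with h | h
      · exact Or.inl h
      · exact Or.inr h
    have e1 : ((q:ℝ)*u + Rf u)/ξ - ((q:ℝ)*u + rf u)/ξ = (Rf u - rf u)/ξ := by ring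
    have e2 : ((q:ℝ)*u - rf u)/ξ - ((q:ℝ)*u - Rf u)/ξ = (Rf u - rf u)/ξ := by ring
    have hof : ENNReal.ofReal ((Rf u - rf u)/ξ) ≤ ENNReal.ofReal (c₀*K/z) :=
      ENNReal.ofReal_le_ofReal hdiff
    calc Measure.count {n : ℤ | cond u n}
        ≤ Measure.count ({n : ℤ | ((q:ℝ)*u + rf u)/ξ ≤ (n:ℝ) ∧ (n:ℝ) ≤ ((q:ℝ)*u + Rf u)/ξ} ∪
          {n : ℤ | ((q:ℝ)*u - Rf u)/ξ ≤ (n:ℝ) ∧ (n:ℝ) ≤ ((q:ℝ)*u - rf u)/ξ}) :=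
          measure_mono hWsub
    _ ≤ Measure.count {n : ℤ | ((q:ℝ)*u + rf u)/ξ ≤ (n:ℝ) ∧ (n:ℝ) ≤ ((q:ℝ)*u + Rf u)/ξ} +
        Measure.count {n : ℤ | ((q:ℝ)*u - Rf u)/ξ ≤ (n:ℝ) ∧ (n:ℝ) ≤ ((q:ℝ)*u - rf u)/ξ} :=
          measure_union_le _ _
    _ ≤ (ENNReal.ofReal (((q:ℝ)*u + Rf u)/ξ - ((q:ℝ)*u + rf u)/ξ) + 1) +
        (ENNReal.ofReal (((q:ℝ)*u - rf u)/ξ - ((q:ℝ)*u - Rf u)/ξ) + 1) :=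
          add_le_add (count_int_interval _ _) (count_int_interval _ _)
    _ = (ENNReal.ofReal ((Rf u - rf u)/ξ) + 1) + (ENNReal.ofReal ((Rf u - rf u)/ξ) + 1) := by
          rw [e1, e2]
    _ ≤ (ENNReal.ofReal (c₀*K/z) + 1) + (ENNReal.ofReal (c₀*K/z) + 1) :=
          add_le_add (add_le_add_left hof 1) (add_le_add_left hof 1)
    _ = ENNReal.ofReal (c₀*K/z) + ENNReal.ofReal (c₀*K/z) + 2 := by ring
    _ = ENNReal.ofReal (2*c₀*K/z) + 2 := by
          rw [← ENNReal.ofReal_add (by positivity) (by positivity)]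
          congr 2
          ring
  -- the main set
  set BB : Set (ℝ × ℤ) := {p : ℝ × ℤ | p.1 ∈ I₁ ∧ ξ - p.1 ∈ I₂ ∧
      M₁ ≤ p.1 ∧ p.1 ≤ 2 * M₁ ∧ M₂ ≤ ξ - p.1 ∧ ξ - p.1 ≤ 2 * M₂ ∧
      jb (τ - ξ ^ 3 + (q : ℝ) ^ 2 / ξ + 3 * ξ * p.1 * (ξ - p.1) +
          (ξ * (p.2 : ℝ) - p.1 * (q : ℝ)) ^ 2 /
            (ξ * p.1 * (ξ - p.1))) ≤ c₀ * K ∧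
      d₀ ≤ |(p.2 : ℝ) / p.1 - ((q : ℝ) - (p.2 : ℝ)) / (ξ - p.1)|} with hBB_def
  have hξne : ξ ≠ 0 := ne_of_gt hξ0
  -- core inclusion
  have hBsub : BB ⊆ Fs LSlow ∪ ⋃ j, Fs (LS j) := by
    rintro ⟨u, n⟩ hp
    simp only [hBB_def, Set.mem_setOf_eq] at hp
    obtain ⟨h1, h2, h3, h4, h5, h6, h7, h8⟩ := hp
    have huS' : u ∈ S' := ⟨h1, h2, h3, h4, h5, h6⟩
    obtain ⟨hu0, hv0, hP0, hPl, hPu⟩ := hS'facts u huS'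
    have habs : |τ - ξ ^ 3 + (q : ℝ) ^ 2 / ξ + 3 * ξ * u * (ξ - u) +
        (ξ * (n : ℝ) - u * (q : ℝ)) ^ 2 / (ξ * u * (ξ - u))| ≤ c₀ * K := by
      refine le_trans ?_ h7
      set y := τ - ξ ^ 3 + (q : ℝ) ^ 2 / ξ + 3 * ξ * u * (ξ - u) +
        (ξ * (n : ℝ) - u * (q : ℝ)) ^ 2 / (ξ * u * (ξ - u)) with hy_def
      calc |y| = Real.sqrt (y^2) := (Real.sqrt_sq_eq_abs y).symm
      _ ≤ Real.sqrt (1 + y^2) := Real.sqrt_le_sqrt (by linarith)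
      _ = jb y := rfl
    obtain ⟨hlo, hup⟩ := abs_le.mp habs
    have hZ0 : 0 < ξ * u * (ξ - u) := by positivity
    have hup2 : (ξ * (n:ℝ) - u * (q:ℝ))^2 ≤ Xf u + hh * Pf u := by
      have hd : (ξ * (n:ℝ) - u * (q:ℝ))^2 / (ξ*u*(ξ-u)) ≤
          c₀*K - (τ - ξ^3 + (q:ℝ)^2/ξ + 3*ξ*u*(ξ-u)) := by linarith
      have hd2 : (ξ * (n:ℝ) - u * (q:ℝ))^2 ≤
          (c₀*K - (τ - ξ^3 + (q:ℝ)^2/ξ + 3*ξ*u*(ξ-u))) * (ξ*u*(ξ-u)) := (div_le_iff₀ hZ0).mp hd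
      have heq : (c₀*K - (τ - ξ^3 + (q:ℝ)^2/ξ + 3*ξ*u*(ξ-u))) * (ξ*u*(ξ-u)) =
          Xf u + hh * Pf u := by
        simp only [hXf_def, hPf_def, hΘ_def, hhh_def]
        field_simp
        ring
      linarith [heq ▸ hd2]
    have hlo2 : Xf u ≤ (ξ * (n:ℝ) - u * (q:ℝ))^2 := by
      have hd : -(c₀*K) - (τ - ξ^3 + (q:ℝ)^2/ξ + 3*ξ*u*(ξ-u)) ≤
          (ξ * (n:ℝ) - u * (q:ℝ))^2 / (ξ*u*(ξ-u)) := by linarith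
      have hd2 : (-(c₀*K) - (τ - ξ^3 + (q:ℝ)^2/ξ + 3*ξ*u*(ξ-u))) * (ξ*u*(ξ-u)) ≤
          (ξ * (n:ℝ) - u * (q:ℝ))^2 := (le_div_iff₀ hZ0).mp hd
      have heq : (-(c₀*K) - (τ - ξ^3 + (q:ℝ)^2/ξ + 3*ξ*u*(ξ-u))) * (ξ*u*(ξ-u)) = Xf u := by
        simp only [hXf_def, hPf_def, hΘ_def, hhh_def]
        field_simp
        ring
      linarith [heq ▸ hd2]
    have hd2 : (d₀ * Pf u)^2 ≤ (ξ * (n:ℝ) - u * (q:ℝ))^2 := by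
      have heqD : (n:ℝ)/u - ((q:ℝ)-(n:ℝ))/(ξ-u) = (ξ * (n:ℝ) - u * (q:ℝ)) / Pf u := by
        simp only [hPf_def]
        field_simp
        ring
      rw [heqD, abs_div, abs_of_pos hP0] at h8
      have hle : d₀ * Pf u ≤ |ξ * (n:ℝ) - u * (q:ℝ)| := (le_div_iff₀ hP0).mp h8
      calc (d₀ * Pf u)^2 ≤ |ξ * (n:ℝ) - u * (q:ℝ)|^2 := by
            apply pow_le_pow_left₀ (by positivity) hle
      _ = (ξ * (n:ℝ) - u * (q:ℝ))^2 := sq_abs _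
    have hrl : rf u ≤ |ξ * (n:ℝ) - u * (q:ℝ)| := by
      simp only [hrf_def]
      calc Real.sqrt (max (Xf u) ((d₀ * Pf u)^2)) ≤ Real.sqrt ((ξ * (n:ℝ) - u * (q:ℝ))^2) :=
            Real.sqrt_le_sqrt (max_le hlo2 hd2)
      _ = |ξ * (n:ℝ) - u * (q:ℝ)| := Real.sqrt_sq_eq_abs _
    have hRl : |ξ * (n:ℝ) - u * (q:ℝ)| ≤ Rf u := by
      simp only [hRf_def]
      calc |ξ * (n:ℝ) - u * (q:ℝ)| = Real.sqrt ((ξ * (n:ℝ) - u * (q:ℝ))^2) :=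
            (Real.sqrt_sq_eq_abs _).symm
      _ ≤ _ := Real.sqrt_le_sqrt hup2
    have hcondn : cond u n := by
      simp only [hcond_def]
      rcases le_or_gt 0 (ξ * (n:ℝ) - u * (q:ℝ)) with hsgn | hsgn
      · left
        rw [abs_of_nonneg hsgn] at hrl hRl
        constructor
        · rw [div_le_iff₀ hξ0]; linarith
        · rw [le_div_iff₀ hξ0]; linarith
      · right
        rw [abs_of_neg hsgn] at hrl hRl
        constructor
        · rw [div_le_iff₀ hξ0]; linarith
        · rw [le_div_iff₀ hξ0]; linarith
    by_cases hlow : Θ < tt 0 * Pf u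
    · left
      have hXfe : Xf u = Θ * Pf u - 3*ξ^2*(Pf u)^2 := by simp only [hXf_def]
      have ht0 : tt 0 = 3*ξ^2 + d₀^2 := by simp only [htt_def]; norm_num
      have hkey : ((3*ξ^2 + d₀^2) * Pf u) * Pf u ≤ (Θ + hh) * Pf u := by
        have e : (d₀ * Pf u)^2 = d₀^2 * (Pf u)^2 := by ring
        linarith only [hd2, hup2, hXfe, e]
      have h10 : (3*ξ^2 + d₀^2) * Pf u ≤ Θ + hh := le_of_mul_le_mul_right hkey hP0
      exact ⟨⟨huS', hlow, by rw [ht0]; exact h10⟩, hcondn⟩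
    · right
      rw [Set.mem_iUnion]
      have hge : tt 0 * Pf u ≤ Θ := not_lt.mp hlow
      have hex : ∃ jj : ℕ, Θ < tt jj * Pf u := by
        obtain ⟨nn, hnn⟩ := pow_unbounded_of_one_lt Θ (one_lt_two (α := ℝ))
        refine ⟨nn, lt_of_lt_of_le hnn ?_⟩
        have hPu1 : 1 ≤ Pf u :=
          le_trans (by nlinarith only [hmn1, hMx1] : (1:ℝ) ≤ mn*Mx) hPl
        have htl : (2:ℝ)^nn ≤ tt nn := by
          simp only [htt_def]
          have hd2' : 1 ≤ d₀^2 := by nlinarith only [hd₀1]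
          have hmm : (2:ℝ)^nn * 1 ≤ (2:ℝ)^nn * d₀^2 :=
            mul_le_mul_of_nonneg_left hd2' (pow_nonneg (by norm_num) nn)
          have hsq : (0:ℝ) ≤ ξ^2 := sq_nonneg ξ
          linarith only [hmm, hsq]
        calc (2:ℝ)^nn ≤ tt nn := htl
        _ = tt nn * 1 := by ring
        _ ≤ tt nn * Pf u := mul_le_mul_of_nonneg_left hPu1 (htt0 nn).le
      have hkspec : Θ < tt (Nat.find hex) * Pf u := Nat.find_spec hex
      have hk0 : Nat.find hex ≠ 0 := by
        intro h0
        rw [h0] at hkspec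
        exact absurd hkspec (not_lt.mpr hge)
      obtain ⟨j, hj⟩ : ∃ j, Nat.find hex = j + 1 :=
        ⟨Nat.find hex - 1, (Nat.succ_pred_eq_of_pos (Nat.pos_of_ne_zero hk0)).symm⟩
      have hprev : ¬ Θ < tt j * Pf u := Nat.find_min hex (by omega)
      exact ⟨j, ⟨huS', not_lt.mp hprev, hj ▸ hkspec⟩, hcondn⟩
  rcases Set.eq_empty_or_nonempty BB with hBe | hBne
  · rw [hBe, measure_empty]; exact zero_le
  obtain ⟨p₀, hp₀⟩ := hBne
  have hp₀' : p₀ ∈ BB := hp₀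
  rw [hBB_def] at hp₀'
  obtain ⟨_, _, hp3, hp4, hp5, hp6, _, _⟩ := hp₀'
  have hξl : Mx ≤ ξ := by
    have hM₁Mx : Mx ≤ M₁ + M₂ := max_le (by linarith) (by linarith)
    linarith
  have hξu : ξ ≤ 4*Mx := by
    have h1 : M₁ ≤ Mx := le_max_left _ _
    have h2 : M₂ ≤ Mx := le_max_right _ _
    linarith
  have hsK0 : 0 < Real.sqrt K := Real.sqrt_pos.mpr hK0
  have hsMx0 : 0 < Real.sqrt Mx := Real.sqrt_pos.mpr hMx0
  have hsmn0 : 0 < Real.sqrt mn := Real.sqrt_pos.mpr hmn0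
  have hd₀K : Real.sqrt K / Real.sqrt mn ≤ d₀ := by
    rw [← Real.sqrt_div hK0.le]; exact hsqKm
  have hd₀M : Real.sqrt Mx / Real.sqrt mn ≤ d₀ := by
    rw [← Real.sqrt_div hMx0.le]; exact hsqMm
  -- low layer estimate
  have key_low : (volume.prod Measure.count) (Fs LSlow) ≤
      ENNReal.ofReal (8*c₀^2*K*(Real.sqrt mn / Real.sqrt Mx)) + 2 * volume LSlow := by
    have hN : ∀ u ∈ LSlow, Measure.count {n : ℤ | cond u n} ≤ ENNReal.ofReal (2*c₀*K/d₀) + 2 := by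
      intro u hu
      obtain ⟨huS', hu2, hu3⟩ := hu
      obtain ⟨hu0, hv0, hP0, hPl, hPu⟩ := hS'facts u huS'
      apply hcount u hP0 d₀ hd₀0
      simp only [hrf_def]
      calc d₀ * Pf u = Real.sqrt ((d₀ * Pf u)^2) := (Real.sqrt_sq (by positivity)).symm
      _ ≤ _ := Real.sqrt_le_sqrt (le_max_right _ _)
    have hb := hprod LSlow hLSlowm _ hN
    have hvol : volume LSlow ≤ ENNReal.ofReal (2 * Real.sqrt (hh / tt 0)) := by
      have hsub2 : LSlow ⊆
          {u : ℝ | Θ / tt 0 < u * (ξ - u) ∧ u * (ξ - u) ≤ Θ / tt 0 + hh / tt 0} := by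
        intro u hu
        obtain ⟨huS', hu2, hu3⟩ := hu
        simp only [hPf_def] at hu2 hu3
        constructor
        · rw [div_lt_iff₀ (htt0 0)]; linarith
        · rw [← add_div, le_div_iff₀ (htt0 0)]; linarith
      exact le_trans (measure_mono hsub2) (parabola_window ξ _ _ (by positivity))
    have hreal : (2*c₀*K/d₀) * (2 * Real.sqrt (hh / tt 0)) ≤
        8*c₀^2*K*(Real.sqrt mn / Real.sqrt Mx) := by
      have m1 : 2*c₀*K/d₀ ≤ 2*c₀*K*Real.sqrt mn/Real.sqrt K := by
        rw [div_le_div_iff₀ hd₀0 hsK0]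
        have hKd : Real.sqrt K ≤ d₀ * Real.sqrt mn := by
          rw [div_le_iff₀ hsmn0] at hd₀K; linarith
        have h2cK : (0:ℝ) ≤ 2*c₀*K := by positivity
        nlinarith only [hKd, h2cK, hd₀0, hsmn0]
      have s1' : hh/tt 0 ≤ 2*c₀*K/Mx := by
        rw [div_le_div_iff₀ (htt0 0) hMx0]
        have t1 : 0 ≤ ξ*(ξ-Mx) := mul_nonneg hξ0.le (by linarith)
        have t2 : ξ*Mx ≤ 3*ξ^2 + d₀^2 := by nlinarith only [t1, sq_nonneg ξ, sq_nonneg d₀]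
        have ht0e : tt 0 = 3*ξ^2 + 2^(0:ℕ) * d₀^2 := by simp only [htt_def]
        have h2cK : (0:ℝ) < 2*c₀*K := by positivity
        rw [ht0e, hhh_def]
        nlinarith only [t2, h2cK]
      have s1 : Real.sqrt (hh/tt 0) ≤ Real.sqrt (2*c₀*K) / Real.sqrt Mx := by
        rw [← Real.sqrt_div (by positivity : (0:ℝ) ≤ 2*c₀*K)]
        exact Real.sqrt_le_sqrt s1'
      have s3 : Real.sqrt (2*c₀*K) ≤ 2*c₀*Real.sqrt K := by
        have e1 : 2*c₀*K = (2*c₀)*K := by ring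
        rw [e1, Real.sqrt_mul (by positivity) K]
        have e2 : Real.sqrt (2*c₀) ≤ 2*c₀ := by
          calc Real.sqrt (2*c₀) ≤ Real.sqrt ((2*c₀)^2) := by
                apply Real.sqrt_le_sqrt; nlinarith only [hc₀0, hc₀]
          _ = 2*c₀ := Real.sqrt_sq (by positivity)
        apply mul_le_mul_of_nonneg_right e2 (Real.sqrt_nonneg K)
      have m2 : 2 * Real.sqrt (hh / tt 0) ≤ 2*(2*c₀*Real.sqrt K)/Real.sqrt Mx := by
        have hstep : Real.sqrt (2*c₀*K) / Real.sqrt Mx ≤ (2*c₀*Real.sqrt K)/Real.sqrt Mx :=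
          (div_le_div_iff_of_pos_right hsMx0).mpr s3
        have hcomb := le_trans s1 hstep
        calc 2 * Real.sqrt (hh / tt 0) ≤ 2 * ((2*c₀*Real.sqrt K)/Real.sqrt Mx) := by linarith
        _ = 2*(2*c₀*Real.sqrt K)/Real.sqrt Mx := by ring
      calc (2*c₀*K/d₀) * (2 * Real.sqrt (hh / tt 0))
          ≤ (2*c₀*K*Real.sqrt mn/Real.sqrt K) * (2*(2*c₀*Real.sqrt K)/Real.sqrt Mx) := by
            apply mul_le_mul m1 m2 (by positivity) (by positivity)
      _ = 8*c₀^2*K*(Real.sqrt mn / Real.sqrt Mx) := by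
            field_simp
            ring
    calc (volume.prod Measure.count) (Fs LSlow)
        ≤ (ENNReal.ofReal (2*c₀*K/d₀) + 2) * volume LSlow := hb
    _ = ENNReal.ofReal (2*c₀*K/d₀) * volume LSlow + 2 * volume LSlow := by rw [add_mul]
    _ ≤ ENNReal.ofReal (2*c₀*K/d₀) * ENNReal.ofReal (2 * Real.sqrt (hh / tt 0)) +
        2 * volume LSlow := by
          exact add_le_add_left (mul_le_mul_right hvol _) _
    _ = ENNReal.ofReal ((2*c₀*K/d₀) * (2 * Real.sqrt (hh / tt 0))) + 2 * volume LSlow := by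
          rw [← ENNReal.ofReal_mul (by positivity)]
    _ ≤ _ := add_le_add_left (ENNReal.ofReal_le_ofReal hreal) _
  -- layer j estimate
  have key_j : ∀ j : ℕ, (volume.prod Measure.count) (Fs (LS j)) ≤
      ENNReal.ofReal ((8*c₀*K*Real.sqrt (mn*Mx) * d₀^(-ε) * ξ^(ε-1)) * r^j) +
        2 * volume (LS j) := by
    intro j
    set sj := Real.sqrt ((2:ℝ)^j) with hsj_def
    have hsj0 : 0 < sj := Real.sqrt_pos.mpr (by positivity)
    rcases Set.eq_empty_or_nonempty (LS j) with hLe | hLne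
    · have hFe : Fs (LS j) = ∅ := by
        ext p
        simp only [hFs_def, Set.mem_setOf_eq, Set.mem_empty_iff_false, iff_false]
        intro hp
        rw [hLe] at hp
        exact Set.notMem_empty _ hp.1
      rw [hFe, measure_empty]
      exact zero_le
    obtain ⟨u₀, hu₀⟩ := hLne
    have hN : ∀ u ∈ LS j, Measure.count {n : ℤ | cond u n} ≤
        ENNReal.ofReal (2*c₀*K/(sj*d₀)) + 2 := by
      intro u hu
      obtain ⟨huS', hu2, hu3⟩ := hu
      obtain ⟨hu0, hv0, hP0, hPl, hPu⟩ := hS'facts u huS'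
      apply hcount u hP0 (sj*d₀) (by positivity)
      have hXl : (2:ℝ)^j * d₀^2 * (Pf u)^2 ≤ Xf u := by
        have hXfe : Xf u = Θ * Pf u - 3*ξ^2*(Pf u)^2 := by simp only [hXf_def]
        have httj : tt j = 3*ξ^2 + 2^j*d₀^2 := by simp only [htt_def]
        have h5 : (tt j * Pf u) * Pf u ≤ Θ * Pf u := mul_le_mul_of_nonneg_right hu2 hP0.le
        rw [httj] at h5
        linarith only [h5, hXfe]
      simp only [hrf_def]
      have heq : sj*d₀*Pf u = Real.sqrt ((2:ℝ)^j * d₀^2 * (Pf u)^2) := by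
        rw [show (2:ℝ)^j * d₀^2 * (Pf u)^2 = ((2:ℝ)^j * d₀^2) * (Pf u)^2 from rfl]
        rw [Real.sqrt_mul (by positivity) ((Pf u)^2),
          Real.sqrt_mul (by positivity) (d₀^2),
          Real.sqrt_sq hd₀0.le, Real.sqrt_sq hP0.le, hsj_def]
      rw [heq]
      exact Real.sqrt_le_sqrt (le_max_of_le_left hXl)
    have hb := hprod (LS j) (hLSm j) _ hN
    obtain ⟨hu₀S', hu₀2, hu₀3⟩ := hu₀
    obtain ⟨hu₀0, hv₀0, hP₀0, hP₀l, hP₀u⟩ := hS'facts u₀ hu₀S'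
    have hΘpos : 0 < Θ := lt_of_lt_of_le (mul_pos (htt0 j) hP₀0) hu₀2
    set wj := Θ/tt j - Θ/tt (j+1) with hwj_def
    have h2j : (2:ℝ)^j ≤ 2^(j+1) := by
      rw [pow_succ]
      nlinarith only [pow_pos (show (0:ℝ)<2 by norm_num) j]
    have htmono : tt j ≤ tt (j+1) := by
      simp only [htt_def]
      nlinarith only [h2j, sq_nonneg d₀]
    have hwj0 : 0 ≤ wj := by
      rw [hwj_def]
      have := div_le_div_of_nonneg_left hΘpos.le (htt0 j) htmono
      linarith
    have hvol : volume (LS j) ≤ ENNReal.ofReal (2 * Real.sqrt wj) := by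
      have hsub2 : LS j ⊆ {u : ℝ | Θ/tt (j+1) < u*(ξ-u) ∧ u*(ξ-u) ≤ Θ/tt (j+1) + wj} := by
        intro u hu
        obtain ⟨huS', hu2, hu3⟩ := hu
        obtain ⟨hu0', hv0', hP0', _, _⟩ := hS'facts u huS'
        simp only [hPf_def] at hu2 hu3
        constructor
        · rw [div_lt_iff₀ (htt0 (j+1))]; linarith
        · have he : Θ/tt (j+1) + wj = Θ/tt j := by rw [hwj_def]; ring
          rw [he, le_div_iff₀ (htt0 j)]; linarith
      exact le_trans (measure_mono hsub2) (parabola_window ξ _ _ hwj0)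
    have hΘle : Θ ≤ tt (j+1) * (4*(mn*Mx)) :=
      le_trans hu₀3.le (mul_le_mul_of_nonneg_left hP₀u (htt0 (j+1)).le)
    have hwle : wj ≤ 4*(mn*Mx) * ((2:ℝ)^j*d₀^2)/tt j := by
      rw [hwj_def, div_sub_div _ _ (htt0 j).ne' (htt0 (j+1)).ne',
        div_le_div_iff₀ (mul_pos (htt0 j) (htt0 (j+1))) (htt0 j)]
      have he : tt (j+1) - tt j = (2:ℝ)^j * d₀^2 := by
        simp only [htt_def]
        rw [pow_succ]
        ring
      have h2d : (0:ℝ) ≤ (2:ℝ)^j*d₀^2 := by positivity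
      have h3 : (0:ℝ) ≤ ((2:ℝ)^j*d₀^2) * tt j := mul_nonneg h2d (htt0 j).le
      have lhs_eq : (Θ * tt (j+1) - tt j * Θ) * tt j = Θ * (((2:ℝ)^j*d₀^2) * tt j) := by
        have hstep : tt (j+1) = tt j + (2:ℝ)^j*d₀^2 := by linarith only [he]
        rw [hstep]; ring
      have rhs_eq : 4*(mn*Mx) * ((2:ℝ)^j*d₀^2) * (tt j * tt (j+1)) =
          (tt (j+1) * (4*(mn*Mx))) * (((2:ℝ)^j*d₀^2) * tt j) := by ring
      rw [lhs_eq, rhs_eq]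
      exact mul_le_mul_of_nonneg_right hΘle h3
    have hsjtt : sj * d₀ ≤ Real.sqrt (tt j) := by
      have he : sj * d₀ = Real.sqrt ((2:ℝ)^j * d₀^2) := by
        rw [Real.sqrt_mul (by positivity) (d₀^2), Real.sqrt_sq hd₀0.le, hsj_def]
      rw [he]
      apply Real.sqrt_le_sqrt
      simp only [htt_def]
      nlinarith only [sq_nonneg ξ]
    have hξtt : ξ ≤ Real.sqrt (tt j) := by
      calc ξ = Real.sqrt (ξ^2) := (Real.sqrt_sq hξ0.le).symm
      _ ≤ Real.sqrt (tt j) := by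
          apply Real.sqrt_le_sqrt
          simp only [htt_def]
          have h2d : (0:ℝ) ≤ (2:ℝ)^j*d₀^2 := by positivity
          nlinarith only [sq_nonneg ξ, h2d]
    have hinterp : (sj*d₀)^ε * ξ^(1-ε) ≤ Real.sqrt (tt j) :=
      rpow_interp (Real.sqrt_pos.mpr (htt0 j)) (by positivity) hξ0.le hε0.le hε1.le hsjtt hξtt
    have hreal : (2*c₀*K/(sj*d₀)) * (2*Real.sqrt wj) ≤
        (8*c₀*K*Real.sqrt (mn*Mx) * d₀^(-ε) * ξ^(ε-1)) * r^j := by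
      have w1 : Real.sqrt wj ≤ 2*Real.sqrt (mn*Mx) * (sj*d₀) / Real.sqrt (tt j) := by
        have e1 : 4*(mn*Mx) * ((2:ℝ)^j*d₀^2)/tt j =
            (2*Real.sqrt (mn*Mx) * (sj*d₀) / Real.sqrt (tt j))^2 := by
          rw [div_pow, mul_pow, mul_pow, mul_pow, hsj_def]
          rw [Real.sq_sqrt (by positivity : (0:ℝ) ≤ mn*Mx),
            Real.sq_sqrt (by positivity : (0:ℝ) ≤ (2:ℝ)^j),
            Real.sq_sqrt (htt0 j).le]
          ring
        calc Real.sqrt wj ≤ Real.sqrt (4*(mn*Mx) * ((2:ℝ)^j*d₀^2)/tt j) :=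
              Real.sqrt_le_sqrt hwle
        _ = _ := by rw [e1, Real.sqrt_sq (by positivity)]
      have c1 : (2*c₀*K/(sj*d₀)) * (2*Real.sqrt wj) ≤
          (2*c₀*K/(sj*d₀)) * (2*(2*Real.sqrt (mn*Mx) * (sj*d₀) / Real.sqrt (tt j))) := by
        apply mul_le_mul_of_nonneg_left (by linarith) (by positivity)
      have c2 : (2*c₀*K/(sj*d₀)) * (2*(2*Real.sqrt (mn*Mx) * (sj*d₀) / Real.sqrt (tt j))) =
          8*c₀*K*Real.sqrt (mn*Mx) / Real.sqrt (tt j) := by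
        have hsd : sj*d₀ ≠ 0 := by positivity
        have hst : Real.sqrt (tt j) ≠ 0 := (Real.sqrt_pos.mpr (htt0 j)).ne'
        field_simp
        ring
      have c3 : 8*c₀*K*Real.sqrt (mn*Mx) / Real.sqrt (tt j) ≤
          8*c₀*K*Real.sqrt (mn*Mx) / ((sj*d₀)^ε * ξ^(1-ε)) := by
        apply div_le_div_of_nonneg_left (by positivity) (by positivity) hinterp
      have c4 : 8*c₀*K*Real.sqrt (mn*Mx) / ((sj*d₀)^ε * ξ^(1-ε)) =
          (8*c₀*K*Real.sqrt (mn*Mx) * d₀^(-ε) * ξ^(ε-1)) * (sj^(-ε)) := by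
        rw [Real.mul_rpow hsj0.le hd₀0.le, Real.rpow_neg hd₀0.le, Real.rpow_neg hsj0.le,
          show (ε - 1 : ℝ) = -(1-ε) by ring, Real.rpow_neg hξ0.le]
        have h1 : sj^ε ≠ 0 := by positivity
        have h2 : d₀^ε ≠ 0 := by positivity
        have h3 : ξ^(1-ε) ≠ 0 := by positivity
        field_simp
      have c5 : sj^(-ε) = r^j := by
        have h1 : sj = (2:ℝ)^((j:ℝ)*(1/2)) := by
          rw [hsj_def, Real.sqrt_eq_rpow, ← Real.rpow_natCast (2:ℝ) j,
            ← Real.rpow_mul (by norm_num : (0:ℝ) ≤ 2)]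
        rw [h1, ← Real.rpow_mul (by norm_num : (0:ℝ) ≤ 2), hr_def,
          ← Real.rpow_natCast ((2:ℝ)^(-(ε/2))) j,
          ← Real.rpow_mul (by norm_num : (0:ℝ) ≤ 2)]
        congr 1
        ring
      calc (2*c₀*K/(sj*d₀)) * (2*Real.sqrt wj)
          ≤ (2*c₀*K/(sj*d₀)) * (2*(2*Real.sqrt (mn*Mx) * (sj*d₀) / Real.sqrt (tt j))) := c1
      _ = 8*c₀*K*Real.sqrt (mn*Mx) / Real.sqrt (tt j) := c2
      _ ≤ 8*c₀*K*Real.sqrt (mn*Mx) / ((sj*d₀)^ε * ξ^(1-ε)) := c3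
      _ = _ := by rw [c4, c5]
    calc (volume.prod Measure.count) (Fs (LS j))
        ≤ (ENNReal.ofReal (2*c₀*K/(sj*d₀)) + 2) * volume (LS j) := hb
    _ = ENNReal.ofReal (2*c₀*K/(sj*d₀)) * volume (LS j) + 2 * volume (LS j) := by rw [add_mul]
    _ ≤ ENNReal.ofReal (2*c₀*K/(sj*d₀)) * ENNReal.ofReal (2*Real.sqrt wj) +
        2 * volume (LS j) := add_le_add_left (mul_le_mul_right hvol _) _
    _ = ENNReal.ofReal ((2*c₀*K/(sj*d₀)) * (2*Real.sqrt wj)) + 2 * volume (LS j) := by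
          rw [← ENNReal.ofReal_mul (by positivity)]
    _ ≤ _ := add_le_add_left (ENNReal.ofReal_le_ofReal hreal) _
  -- volume bounds via I₁, I₂
  have hvolS' : ∀ T : Set ℝ, T ⊆ S' →
      volume T ≤ ENNReal.ofReal (min (volume I₁).toReal (volume I₂).toReal) := by
    intro T hT
    have hTI₁ : T ⊆ I₁ := fun u hu => (hT hu).1
    have hTI₂ : T ⊆ (fun u : ℝ => ξ - u) ⁻¹' I₂ := fun u hu => (hT hu).2.1
    have hI₁fin : volume I₁ < ⊤ :=
      lt_of_le_of_lt (measure_mono subset_closure) hI₁b.isCompact_closure.measure_lt_top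
    have hI₂fin : volume I₂ < ⊤ :=
      lt_of_le_of_lt (measure_mono subset_closure) hI₂b.isCompact_closure.measure_lt_top
    have hrefl : volume ((fun u : ℝ => ξ - u) ⁻¹' I₂) = volume I₂ := by
      have h : (fun u : ℝ => ξ - u) ⁻¹' I₂ =
          (fun u : ℝ => -u) ⁻¹' ((fun v : ℝ => v + ξ) ⁻¹' I₂) := by
        ext u; simp [sub_eq_neg_add, add_comm]
      rw [h, Measure.measure_preimage_neg, measure_preimage_add_right]
    have h1 : volume T ≤ volume I₁ := measure_mono hTI₁
    have h2 : volume T ≤ volume I₂ := le_trans (measure_mono hTI₂) (le_of_eq hrefl)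
    rcases le_total (volume I₁) (volume I₂) with hc | hc
    · have hm : min (volume I₁).toReal (volume I₂).toReal = (volume I₁).toReal :=
        min_eq_left (ENNReal.toReal_mono hI₂fin.ne hc)
      rw [hm, ENNReal.ofReal_toReal hI₁fin.ne]
      exact h1
    · have hm : min (volume I₁).toReal (volume I₂).toReal = (volume I₂).toReal :=
        min_eq_right (ENNReal.toReal_mono hI₁fin.ne hc)
      rw [hm, ENNReal.ofReal_toReal hI₂fin.ne]
      exact h2
  have hsubLSlow : LSlow ⊆ S' := fun u hu => hu.1
  have hsubLS : ∀ j, LS j ⊆ S' := fun j u hu => hu.1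
  have hdisj : Pairwise (Function.onFun Disjoint LS) := by
    have key : ∀ a b : ℕ, a < b → Disjoint (LS a) (LS b) := by
      intro a b hab
      rw [Set.disjoint_left]
      intro u hua hub
      obtain ⟨huS', _, ha3⟩ := hua
      obtain ⟨_, hb2, _⟩ := hub
      obtain ⟨_, _, hP0, _, _⟩ := hS'facts u huS'
      have hmono : tt (a+1) ≤ tt b := by
        simp only [htt_def]
        have h2ab : (2:ℝ)^(a+1) ≤ 2^b := pow_le_pow_right₀ (by norm_num) (by omega)
        nlinarith only [h2ab, sq_nonneg d₀]
      have := mul_le_mul_of_nonneg_right hmono hP0.le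
      linarith
    intro i j hij
    rcases lt_or_gt_of_ne hij with h | h
    · exact key i j h
    · exact (key j i h).symm
  have hsum_vol : ∑' j, volume (LS j) ≤
      ENNReal.ofReal (min (volume I₁).toReal (volume I₂).toReal) := by
    rw [← measure_iUnion hdisj hLSm]
    exact hvolS' _ (Set.iUnion_subset hsubLS)
  have hminI0 : 0 ≤ min (volume I₁).toReal (volume I₂).toReal :=
    le_min ENNReal.toReal_nonneg ENNReal.toReal_nonneg
  -- sum the geometric series
  have hβ0 : 0 ≤ 8*c₀*K*Real.sqrt (mn*Mx) * d₀^(-ε) * ξ^(ε-1) := by positivity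
  have htsum1 : ∑' j : ℕ, ENNReal.ofReal ((8*c₀*K*Real.sqrt (mn*Mx) * d₀^(-ε) * ξ^(ε-1)) * r^j) =
      ENNReal.ofReal ((8*c₀*K*Real.sqrt (mn*Mx) * d₀^(-ε) * ξ^(ε-1)) * (1-r)⁻¹) := by
    have hsummable : Summable (fun j : ℕ => (8*c₀*K*Real.sqrt (mn*Mx) * d₀^(-ε) * ξ^(ε-1)) * r^j) :=
      (summable_geometric_of_lt_one hr0.le hr1).mul_left _
    rw [← ENNReal.ofReal_tsum_of_nonneg (fun j => by positivity) hsummable]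
    congr 1
    rw [tsum_mul_left, tsum_geometric_of_lt_one hr0.le hr1]
  -- final real comparisons
  have hrpow1 : ∀ x : ℝ, 1 ≤ x → 1 ≤ x ^ (ε/2) := fun x hx =>
    Real.one_le_rpow hx (by positivity)
  have hTm_eq : mn ^ ((1:ℝ)/2 + ε/2) * Mx ^ (-(1:ℝ)/2 + ε/2) =
      (Real.sqrt mn/Real.sqrt Mx) * (mn^(ε/2) * Mx^(ε/2)) := by
    rw [Real.rpow_add hmn0, Real.rpow_add hMx0,
      show (-(1:ℝ)/2) = -((1:ℝ)/2) by ring, Real.rpow_neg hMx0.le,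
      ← Real.sqrt_eq_rpow, ← Real.sqrt_eq_rpow]
    field_simp
  have hT1 : Real.sqrt mn/Real.sqrt Mx ≤ mn ^ ((1:ℝ)/2 + ε/2) * Mx ^ (-(1:ℝ)/2 + ε/2) := by
    have h1 : 1 ≤ mn^(ε/2)*Mx^(ε/2) := by
      have a1 := hrpow1 mn hmn1
      have a2 := hrpow1 Mx hMx1
      nlinarith only [a1, a2]
    calc Real.sqrt mn/Real.sqrt Mx = (Real.sqrt mn/Real.sqrt Mx) * 1 := by ring
    _ ≤ (Real.sqrt mn/Real.sqrt Mx) * (mn^(ε/2) * Mx^(ε/2)) :=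
        mul_le_mul_of_nonneg_left h1 (by positivity)
    _ = _ := hTm_eq.symm
  have hT2 : Real.sqrt (mn*Mx) * d₀^(-ε) * ξ^(ε-1) ≤
      mn ^ ((1:ℝ)/2 + ε/2) * Mx ^ (-(1:ℝ)/2 + ε/2) := by
    have hsMm0 : 0 < Real.sqrt (Mx/mn) := Real.sqrt_pos.mpr (by positivity)
    have sA : d₀^(-ε) ≤ (Real.sqrt (Mx/mn))^(-ε) :=
      Real.rpow_le_rpow_of_nonpos hsMm0 hsqMm (by linarith)
    have sB : ξ^(ε-1) ≤ Mx^(ε-1) :=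
      Real.rpow_le_rpow_of_nonpos hMx0 hξl (by linarith)
    have hC : Real.sqrt (mn*Mx) * (Real.sqrt (Mx/mn))^(-ε) * Mx^(ε-1) =
        mn ^ ((1:ℝ)/2 + ε/2) * Mx ^ (-(1:ℝ)/2 + ε/2) := by
      rw [Real.sqrt_eq_rpow (mn*Mx), Real.sqrt_eq_rpow (Mx/mn),
        ← Real.rpow_mul (by positivity : (0:ℝ) ≤ Mx/mn),
        Real.mul_rpow hmn0.le hMx0.le,
        Real.div_rpow hMx0.le hmn0.le]
      rw [div_eq_mul_inv (Mx ^ (1 / 2 * -ε)), ← Real.rpow_neg hmn0.le]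
      rw [show mn ^ ((1:ℝ)/2) * Mx ^ ((1:ℝ)/2) * (Mx ^ ((1:ℝ) / 2 * -ε) * mn ^ (-((1:ℝ) / 2 * -ε))) * Mx ^ (ε - 1) =
        (mn ^ ((1:ℝ)/2) * mn ^ (-((1:ℝ) / 2 * -ε))) * (Mx ^ ((1:ℝ)/2) * Mx ^ ((1:ℝ) / 2 * -ε) * Mx ^ (ε - 1)) from by ring]
      rw [← Real.rpow_add hmn0, ← Real.rpow_add hMx0, ← Real.rpow_add hMx0]
      congr 1 <;> congr 1 <;> ring
    calc Real.sqrt (mn*Mx) * d₀^(-ε) * ξ^(ε-1)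
        ≤ Real.sqrt (mn*Mx) * (Real.sqrt (Mx/mn))^(-ε) * ξ^(ε-1) := by
          apply mul_le_mul_of_nonneg_right
            (mul_le_mul_of_nonneg_left sA (Real.sqrt_nonneg _)) (by positivity)
    _ ≤ Real.sqrt (mn*Mx) * (Real.sqrt (Mx/mn))^(-ε) * Mx^(ε-1) := by
          apply mul_le_mul_of_nonneg_left sB (by positivity)
    _ = _ := hC
  set Mi := min (volume I₁).toReal (volume I₂).toReal with hMi_def
  have hofA : (0:ℝ) ≤ 8*c₀^2*K*(Real.sqrt mn/Real.sqrt Mx) := by positivity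
  have hofB : (0:ℝ) ≤ (8*c₀*K*Real.sqrt (mn*Mx) * d₀^(-ε) * ξ^(ε-1)) * (1-r)⁻¹ :=
    mul_nonneg hβ0 hA0.le
  have hTm0 : (0:ℝ) ≤ mn ^ ((1:ℝ)/2 + ε/2) * Mx ^ (-(1:ℝ)/2 + ε/2) := by positivity
  have hfinal : 8*c₀^2*K*(Real.sqrt mn/Real.sqrt Mx) + 2*Mi +
      ((8*c₀*K*Real.sqrt (mn*Mx) * d₀^(-ε) * ξ^(ε-1)) * (1-r)⁻¹ + 2*Mi) ≤
      (8*c₀^2 + 8*c₀*(1-r)⁻¹ + 4) *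
        (mn ^ ((1:ℝ)/2 + ε/2) * Mx ^ (-(1:ℝ)/2 + ε/2) * K + Mi) := by
    have hfa : 8*c₀^2*K*(Real.sqrt mn/Real.sqrt Mx) ≤
        8*c₀^2*K*(mn ^ ((1:ℝ)/2 + ε/2) * Mx ^ (-(1:ℝ)/2 + ε/2)) :=
      mul_le_mul_of_nonneg_left hT1 (by positivity)
    have hfb' : 8*c₀*K*(Real.sqrt (mn*Mx) * d₀^(-ε) * ξ^(ε-1)) ≤
        8*c₀*K*(mn ^ ((1:ℝ)/2 + ε/2) * Mx ^ (-(1:ℝ)/2 + ε/2)) :=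
      mul_le_mul_of_nonneg_left hT2 (by positivity)
    have hfb : (8*c₀*K*(Real.sqrt (mn*Mx) * d₀^(-ε) * ξ^(ε-1))) * (1-r)⁻¹ ≤
        (8*c₀*K*(mn ^ ((1:ℝ)/2 + ε/2) * Mx ^ (-(1:ℝ)/2 + ε/2))) * (1-r)⁻¹ :=
      mul_le_mul_of_nonneg_right hfb' hA0.le
    have hTmK0 : (0:ℝ) ≤ (mn ^ ((1:ℝ)/2 + ε/2) * Mx ^ (-(1:ℝ)/2 + ε/2)) * K :=
      mul_nonneg hTm0 hK0.le
    have hx1 : (0:ℝ) ≤ (8*c₀^2 + 8*c₀*(1-r)⁻¹)*Mi :=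
      mul_nonneg (by nlinarith only [hc₀0, hA0]) hminI0
    nlinarith only [hfa, hfb, hTmK0, hx1, hminI0]
  calc (volume.prod Measure.count) BB
      ≤ (volume.prod Measure.count) (Fs LSlow ∪ ⋃ j, Fs (LS j)) := measure_mono hBsub
  _ ≤ (volume.prod Measure.count) (Fs LSlow) +
      (volume.prod Measure.count) (⋃ j, Fs (LS j)) := measure_union_le _ _
  _ ≤ (ENNReal.ofReal (8*c₀^2*K*(Real.sqrt mn/Real.sqrt Mx)) + 2 * volume LSlow) +
      ∑' j, (volume.prod Measure.count) (Fs (LS j)) :=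
        add_le_add key_low (measure_iUnion_le _)
  _ ≤ (ENNReal.ofReal (8*c₀^2*K*(Real.sqrt mn/Real.sqrt Mx)) + 2 * volume LSlow) +
      ∑' j, (ENNReal.ofReal ((8*c₀*K*Real.sqrt (mn*Mx) * d₀^(-ε) * ξ^(ε-1)) * r^j) +
        2 * volume (LS j)) := add_le_add_right (ENNReal.tsum_le_tsum key_j) _
  _ = (ENNReal.ofReal (8*c₀^2*K*(Real.sqrt mn/Real.sqrt Mx)) + 2 * volume LSlow) +
      (ENNReal.ofReal ((8*c₀*K*Real.sqrt (mn*Mx) * d₀^(-ε) * ξ^(ε-1)) * (1-r)⁻¹) +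
        2 * ∑' j, volume (LS j)) := by
          rw [ENNReal.tsum_add, htsum1, ENNReal.tsum_mul_left]
  _ ≤ (ENNReal.ofReal (8*c₀^2*K*(Real.sqrt mn/Real.sqrt Mx)) + 2 * ENNReal.ofReal Mi) +
      (ENNReal.ofReal ((8*c₀*K*Real.sqrt (mn*Mx) * d₀^(-ε) * ξ^(ε-1)) * (1-r)⁻¹) +
        2 * ENNReal.ofReal Mi) := by
          apply add_le_add
          · exact add_le_add_right (mul_le_mul_right (hvolS' LSlow hsubLSlow) 2) _
          · exact add_le_add_right (mul_le_mul_right hsum_vol 2) _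
  _ = ENNReal.ofReal (8*c₀^2*K*(Real.sqrt mn/Real.sqrt Mx) + 2*Mi +
      ((8*c₀*K*Real.sqrt (mn*Mx) * d₀^(-ε) * ξ^(ε-1)) * (1-r)⁻¹ + 2*Mi)) := by
        rw [show (2:ℝ≥0∞) = ENNReal.ofReal 2 from (ENNReal.ofReal_ofNat 2).symm,
          ← ENNReal.ofReal_mul (by norm_num : (0:ℝ) ≤ 2),
          ← ENNReal.ofReal_add hofA (by linarith : (0:ℝ) ≤ 2*Mi),
          ← ENNReal.ofReal_add hofB (by linarith : (0:ℝ) ≤ 2*Mi),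
          ← ENNReal.ofReal_add (by linarith : (0:ℝ) ≤ 8*c₀^2*K*(Real.sqrt mn/Real.sqrt Mx) + 2*Mi)
            (by linarith : (0:ℝ) ≤ (8*c₀*K*Real.sqrt (mn*Mx) * d₀^(-ε) * ξ^(ε-1)) * (1-r)⁻¹ + 2*Mi)]
  _ ≤ ENNReal.ofReal ((8*c₀^2 + 8*c₀*(1-r)⁻¹ + 4) *
      (mn ^ ((1:ℝ)/2 + ε/2) * Mx ^ (-(1:ℝ)/2 + ε/2) * K + Mi)) :=
        ENNReal.ofReal_le_ofReal hfinal
end
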